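/- arXiv:2501.04342 — 5 statements merged into one kernel-verified Lean document; each statement's English description precedes it below -/
import Mathlib

section
/- Let E be a set and ℱ a collection of finite nonempty subsets of E satisfying the strong circuit elimination axiom: for all F₀, F₁ ∈ ℱ, e ∈ F₀ ∩ F₁, and f ∈ F₀ △ F₁, there is F ∈ ℱ with f ∈ F ⊆ (F₀ ∪ F₁) \ {e}. Then the set 𝒞 of ⊆-minimal elements of ℱ is the set of circuits of a (finitary) matroid on E, and every F ∈ ℱ is a union of elements of 𝒞. -/
open Set

variable {α : Type*}

/-- `C` is a circuit of the matroid `M`: a minimal dependent subset of the ground set. -/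
def MCircuit (M : Matroid α) (C : Set α) : Prop :=
  C ⊆ M.E ∧ ¬ M.Indep C ∧ ∀ D, D ⊂ C → M.Indep D

/-- If `ℱ` is a collection of finite nonempty subsets of `E` satisfying the strong circuit
elimination axiom, then the ⊆-minimal elements of `ℱ` are the circuits of a finitary
matroid on `E`, and every member of `ℱ` is a union of such circuits (a scrawl). -/
theorem stmt3 (E : Set α) (ℱ : Set (Set α))
    (hfin : ∀ F ∈ ℱ, F.Finite) (hne : ∀ F ∈ ℱ, F.Nonempty) (hsub : ∀ F ∈ ℱ, F ⊆ E)
    (helim : ∀ F₀ ∈ ℱ, ∀ F₁ ∈ ℱ, ∀ e ∈ F₀ ∩ F₁, ∀ f ∈ (F₀ \ F₁) ∪ (F₁ \ F₀),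
      ∃ F ∈ ℱ, f ∈ F ∧ F ⊆ (F₀ ∪ F₁) \ {e}) :
    ∃ M : Matroid α, M.E = E ∧ M.Finitary ∧
      (∀ C, MCircuit M C ↔ (C ∈ ℱ ∧ ∀ F ∈ ℱ, F ⊆ C → F = C)) ∧
      (∀ F ∈ ℱ, ∀ f ∈ F, ∃ C, MCircuit M C ∧ f ∈ C ∧ C ⊆ F) := by
  classical
  set Indep : Set α → Prop := fun I => I ⊆ E ∧ ∀ F ∈ ℱ, ¬ F ⊆ I with hIndepDef
  have indep_subset : ∀ ⦃I J : Set α⦄, Indep J → I ⊆ J → Indep I := by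
    rintro I J ⟨hJE, hJ⟩ hIJ
    exact ⟨hIJ.trans hJE, fun F hF hFI => hJ F hF (hFI.trans hIJ)⟩
  have indep_empty : Indep ∅ := by
    refine ⟨empty_subset _, fun F hF hFe => ?_⟩
    exact (hne F hF).ne_empty (subset_empty_iff.1 hFe)
  have indep_compact : ∀ I, (∀ J, J ⊆ I → J.Finite → Indep J) → Indep I := by
    intro I h
    constructor
    · intro x hx
      exact (h {x} (singleton_subset_iff.2 hx) (finite_singleton x)).1 rfl
    · intro F hF hFI
      exact (h F hFI (hfin F hF)).2 F hF subset_rfl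
  have subset_ground : ∀ I, Indep I → I ⊆ E := fun I hI => hI.1
  -- the augmentation axiom
  have indep_aug : ∀ ⦃I J : Set α⦄, Indep I → I.Finite → Indep J → J.Finite →
      I.ncard < J.ncard → ∃ e ∈ J, e ∉ I ∧ Indep (insert e I) := by
    intro I J hI hIfin hJ hJfin hcard
    by_contra hcon
    push_neg at hcon
    -- minimize |I \ K| over independent K ⊆ I ∪ J with |K| > |I|
    set P : Set α → Prop := fun K => Indep K ∧ K ⊆ I ∪ J ∧ I.ncard < K.ncard with hP
    set S : Set ℕ := {n | ∃ K, P K ∧ (I \ K).ncard = n} with hS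
    have hSne : S.Nonempty := ⟨(I \ J).ncard, J, ⟨hJ, subset_union_right, hcard⟩, rfl⟩
    obtain ⟨K, ⟨hKi, hKIJ, hKcard⟩, hKmin⟩ : ∃ K, P K ∧ (I \ K).ncard = sInf S :=
      Nat.sInf_mem hSne
    have hKfin : K.Finite := (hIfin.union hJfin).subset hKIJ
    by_cases hIK : I \ K = ∅
    · -- I ⊆ K, so K has an element outside I which augments I
      have hIsubK : I ⊆ K := diff_eq_empty.1 hIK
      have : ∃ e, e ∈ K \ I := by
        by_contra h
        push_neg at h
        have : K ⊆ I := fun x hx => by_contra fun hxI => h x ⟨hx, hxI⟩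
        exact absurd (ncard_le_ncard this hIfin) (not_le.2 hKcard)
      obtain ⟨e, heK, heI⟩ := this
      have heJ : e ∈ J := (hKIJ heK).resolve_left heI
      exact hcon e heJ heI (indep_subset hKi (insert_subset heK hIsubK))
    · obtain ⟨x, hxI, hxK⟩ := nonempty_iff_ne_empty.2 hIK
      -- for each f ∈ K \ I, the exchange set is dependent and contains a member of ℱ through x
      have hCf : ∀ f ∈ K \ I, ∃ C ∈ ℱ, C ⊆ insert x K \ {f} ∧ x ∈ C := by
        rintro f ⟨hfK, hfI⟩
        have hxf : x ≠ f := fun h => hfI (h ▸ hxI)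
        set T := insert x K \ {f} with hT
        have hTcard : T.ncard = K.ncard := ncard_exchange' hxK hfK
        have hTIJ : T ⊆ I ∪ J :=
          (diff_subset.trans (insert_subset (Or.inl hxI) hKIJ))
        have hTfin : T.Finite := ((hKfin.insert x).diff)
        have hITcard : (I \ T).ncard < (I \ K).ncard := by
          have hIT : I \ T = (I \ K) \ {x} := by
            ext y
            simp only [hT, mem_diff, mem_insert_iff, mem_singleton_iff, not_and, not_not]
            constructor
            · rintro ⟨hyI, hyT⟩
              have hyf : y ≠ f := fun h => hfI (h ▸ hyI)
              have hyxK : ¬ (y = x ∨ y ∈ K) := fun h => hyf (hyT h)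
              push_neg at hyxK
              exact ⟨⟨hyI, hyxK.2⟩, hyxK.1⟩
            · rintro ⟨⟨hyI, hyK⟩, hyx⟩
              refine ⟨hyI, fun h => ?_⟩
              rcases h with rfl | h'
              · exact absurd rfl hyx
              · exact absurd h' hyK
          rw [hIT]
          exact ncard_diff_singleton_lt_of_mem ⟨hxI, hxK⟩ (hIfin.diff)
        have hTdep : ¬ Indep T := by
          intro hTi
          have hle : sInf S ≤ (I \ T).ncard :=
            Nat.sInf_le ⟨T, ⟨hTi, hTIJ, by rw [hTcard]; exact hKcard⟩, rfl⟩
          omega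
        have hTE : T ⊆ E := diff_subset.trans (insert_subset (hI.1 hxI) hKi.1)
        have : ∃ C ∈ ℱ, C ⊆ T := by
          by_contra h
          push_neg at h
          exact hTdep ⟨hTE, fun F hF hFT => h F hF hFT⟩
        obtain ⟨C, hCF, hCT⟩ := this
        refine ⟨C, hCF, hCT, ?_⟩
        by_contra hxC
        refine hKi.2 C hCF fun y hy => ?_
        have := hCT hy
        rcases this.1 with rfl | hyK
        · exact absurd hy hxC
        · exact hyK
      -- K \ I is nonempty
      have hKIne : ∃ f, f ∈ K \ I := by
        by_contra h
        push_neg at h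
        have : K ⊆ I := fun y hy => by_contra fun hyI => h y ⟨hy, hyI⟩
        exact absurd (ncard_le_ncard this hIfin) (not_le.2 hKcard)
      obtain ⟨f₀, hf₀⟩ := hKIne
      obtain ⟨C, hCF, hCT, hxC⟩ := hCf f₀ hf₀
      -- C must meet K \ I
      have hCmeet : ∃ g, g ∈ C ∩ (K \ I) := by
        by_contra h
        push_neg at h
        refine hI.2 C hCF fun y hy => ?_
        rcases (hCT hy).1 with rfl | hyK
        · exact hxI
        · by_contra hyI
          exact h y ⟨hy, hyK, hyI⟩
      obtain ⟨g, hgC, hgKI⟩ := hCmeet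
      obtain ⟨D, hDF, hDT, hxD⟩ := hCf g hgKI
      have hgD : g ∉ D := fun h => (hDT h).2 rfl
      obtain ⟨G, hGF, hgG, hGsub⟩ :=
        helim C hCF D hDF x ⟨hxC, hxD⟩ g (Or.inl ⟨hgC, hgD⟩)
      -- G ⊆ K, contradicting independence of K
      refine hKi.2 G hGF fun y hy => ?_
      have hyCD := hGsub hy
      have hyx : y ≠ x := fun h => hyCD.2 (h ▸ rfl)
      rcases hyCD.1 with hyC | hyD
      · rcases (hCT hyC).1 with rfl | h
        · exact absurd rfl hyx
        · exact h
      · rcases (hDT hyD).1 with rfl | h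
        · exact absurd rfl hyx
        · exact h
  refine ⟨(IndepMatroid.ofFinitaryCardAugment E Indep indep_empty indep_subset indep_aug
      indep_compact subset_ground).matroid, rfl, by infer_instance, ?_, ?_⟩
  · -- circuit characterization
    intro C
    constructor
    · rintro ⟨hCE, hCdep, hCmin⟩
      simp only [IndepMatroid.matroid_indep_iff, IndepMatroid.ofFinitaryCardAugment_indep] at hCdep hCmin
      have hCE' : C ⊆ E := hCE
      have hex : ∃ F ∈ ℱ, F ⊆ C := by
        by_contra h
        push_neg at h
        exact hCdep ⟨hCE', fun F hF hFC => h F hF hFC⟩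
      have key : ∀ F ∈ ℱ, F ⊆ C → F = C := by
        intro F hF hFC
        by_contra hne'
        have hFssub : F ⊂ C := hFC.ssubset_of_ne hne'
        exact (hCmin F hFssub).2 F hF subset_rfl
      obtain ⟨F, hF, hFC⟩ := hex
      exact ⟨key F hF hFC ▸ hF, key⟩
    · rintro ⟨hCF, hCmin⟩
      refine ⟨hsub C hCF, ?_, ?_⟩
      · simp only [IndepMatroid.matroid_indep_iff, IndepMatroid.ofFinitaryCardAugment_indep]
        exact fun h => h.2 C hCF subset_rfl
      · intro D hD
        simp only [IndepMatroid.matroid_indep_iff, IndepMatroid.ofFinitaryCardAugment_indep]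
        refine ⟨hD.subset.trans (hsub C hCF), fun F hF hFD => ?_⟩
        have : F = C := hCmin F hF (hFD.trans hD.subset)
        exact hD.not_subset (this ▸ hFD)
  · -- scrawl: every element of F lies in a minimal member of ℱ inside F
    intro F hF f hf
    set S : Set ℕ := {n | ∃ C ∈ ℱ, f ∈ C ∧ C ⊆ F ∧ C.ncard = n} with hS
    have hSne : S.Nonempty := ⟨F.ncard, F, hF, hf, subset_rfl, rfl⟩
    obtain ⟨C, hCF, hfC, hCsub, hCcard⟩ : ∃ C ∈ ℱ, f ∈ C ∧ C ⊆ F ∧ C.ncard = sInf S :=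
      Nat.sInf_mem hSne
    have hCmin : ∀ F' ∈ ℱ, F' ⊆ C → F' = C := by
      intro F' hF' hF'C
      by_contra hne'
      have hss : F' ⊂ C := hF'C.ssubset_of_ne hne'
      by_cases hfF' : f ∈ F'
      · have : sInf S ≤ F'.ncard := Nat.sInf_le ⟨F', hF', hfF', hF'C.trans hCsub, rfl⟩
        have hlt : F'.ncard < C.ncard := ncard_lt_ncard hss (hfin C hCF)
        omega
      · obtain ⟨e, heF'⟩ := hne F' hF'
        obtain ⟨G, hGF, hfG, hGsub⟩ :=
          helim C hCF F' hF' e ⟨hF'C heF', heF'⟩ f (Or.inl ⟨hfC, hfF'⟩)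
        have hGC : G ⊆ C \ {e} := by
          intro y hy
          have := hGsub hy
          exact ⟨this.1.elim id (fun h => hF'C h), this.2⟩
        have hGss : G ⊂ C := hGC.trans_ssubset (sdiff_singleton_ssubset.2 (hF'C heF'))
        have : sInf S ≤ G.ncard :=
          Nat.sInf_le ⟨G, hGF, hfG, hGss.subset.trans hCsub, rfl⟩
        have hlt : G.ncard < C.ncard := ncard_lt_ncard hGss (hfin C hCF)
        omega
    refine ⟨C, ?_, hfC, hCsub⟩
    refine ⟨hsub C hCF, ?_, ?_⟩
    · simp only [IndepMatroid.matroid_indep_iff, IndepMatroid.ofFinitaryCardAugment_indep]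
      exact fun h => h.2 C hCF subset_rfl
    · intro D hD
      simp only [IndepMatroid.matroid_indep_iff, IndepMatroid.ofFinitaryCardAugment_indep]
      refine ⟨hD.subset.trans (hsub C hCF), fun F' hF' hF'D => ?_⟩
      have : F' = C := hCmin F' hF' (hF'D.trans hD.subset)
      exact hD.not_subset (this ▸ hF'D)
end

section
/- Let M be a matroid, C₀ and C₁ circuits of M, f ∈ C₀ ∩ C₁, e₀ ∈ C₀ \ C₁, e₁ ∈ C₁ \ C₀, and suppose (C₀ ∪ C₁) \ {e₀, e₁} is independent in M. Then there is a unique circuit C of M with C ⊆ (C₀ ∪ C₁) \ {f}, and moreover C₀ △ C₁ ⊆ C. -/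
open Set

variable {α : Type*}

lemma mcirc_diff_indep {M : Matroid α} {C : Set α} (hC : MCircuit M C) {x : α} (hx : x ∈ C) :
    M.Indep (C \ {x}) :=
  hC.2.2 _ (sdiff_singleton_ssubset.2 hx)

lemma mcirc_mem_closure {M : Matroid α} {C : Set α} (hC : MCircuit M C) {x : α} (hx : x ∈ C) :
    x ∈ M.closure (C \ {x}) := by
  by_contra h
  rw [(mcirc_diff_indep hC hx).notMem_closure_iff_of_notMem (by simp) (hC.1 hx)] at h
  rw [insert_diff_singleton, insert_eq_of_mem hx] at h
  exact hC.2.1 h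

lemma lemA {M : Matroid α} {I C D : Set α} {e : α} (hI : M.Indep I) (heI : e ∉ I)
    (heE : e ∈ M.E) (hC : MCircuit M C) (hCs : C ⊆ insert e I)
    (hD : ¬ M.Indep D) (hDs : D ⊆ insert e I) : C ⊆ D := by
  intro x hxC
  by_contra hxD
  rcases eq_or_ne x e with rfl | hxe
  · exact hD (hI.subset fun d hd => ((hDs hd).resolve_left (fun h => hxD (h ▸ hd))))
  have hxI : x ∈ I := (hCs hxC).resolve_left hxe
  have h1 : M.Indep (I \ {x}) := hI.subset diff_subset
  have h2 : ¬ M.Indep (insert e (I \ {x})) := by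
    intro h
    refine hD (h.subset fun d hd => ?_)
    rcases hDs hd with h' | h'
    · exact h' ▸ mem_insert _ _
    · exact mem_insert_of_mem _ ⟨h', fun hh => hxD (show x ∈ D from hh ▸ hd)⟩
  have he_cl : e ∈ M.closure (I \ {x}) := by
    by_contra h
    exact h2 ((h1.notMem_closure_iff_of_notMem (fun h' => heI h'.1) heE).1 h)
  have hsub : C \ {x} ⊆ insert e (I \ {x}) := by
    intro c hc
    rcases hCs hc.1 with h' | h'
    · exact h' ▸ mem_insert _ _
    · exact mem_insert_of_mem _ ⟨h', hc.2⟩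
  have hxcl : x ∈ M.closure (I \ {x}) := by
    have h3 : insert e (I \ {x}) ⊆ M.closure (I \ {x}) :=
      insert_subset he_cl (M.subset_closure _ h1.subset_ground)
    exact ((M.closure_subset_closure hsub).trans
      (M.closure_subset_closure_of_subset_closure h3)) (mcirc_mem_closure hC hxC)
  have hins : M.Indep (insert x (I \ {x})) := by
    rwa [insert_diff_singleton, insert_eq_of_mem hxI]
  rw [h1.insert_indep_iff_of_notMem (by simp)] at hins
  exact hins.2 hxcl

/-- Given circuits `C₀, C₁`, `f ∈ C₀ ∩ C₁`, `e₀ ∈ C₀ \ C₁`, `e₁ ∈ C₁ \ C₀` with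
`(C₀ ∪ C₁) \ {e₀, e₁}` independent, there is a unique circuit `C ⊆ (C₀ ∪ C₁) \ {f}`,
and moreover `C₀ △ C₁ ⊆ C`. -/
theorem stmt4 (M : Matroid α) (C₀ C₁ : Set α) (hC₀ : MCircuit M C₀) (hC₁ : MCircuit M C₁)
    (f : α) (hf : f ∈ C₀ ∩ C₁) (e₀ : α) (he₀ : e₀ ∈ C₀ \ C₁) (e₁ : α) (he₁ : e₁ ∈ C₁ \ C₀)
    (hI : M.Indep ((C₀ ∪ C₁) \ {e₀, e₁})) :
    (∃! C, MCircuit M C ∧ C ⊆ (C₀ ∪ C₁) \ {f}) ∧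
      ∀ C, MCircuit M C → C ⊆ (C₀ ∪ C₁) \ {f} → (C₀ \ C₁) ∪ (C₁ \ C₀) ⊆ C := by
  obtain ⟨hfC₀, hfC₁⟩ := hf
  obtain ⟨he₀C₀, he₀C₁⟩ := he₀
  obtain ⟨he₁C₁, he₁C₀⟩ := he₁
  set U : Set α := C₀ ∪ C₁ with hUdef
  have hUE : U ⊆ M.E := union_subset hC₀.1 hC₁.1
  have hfe₀ : f ≠ e₀ := fun h => he₀C₁ (h ▸ hfC₁)
  have hfe₁ : f ≠ e₁ := fun h => he₁C₀ (h ▸ hfC₀)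
  have h01 : e₀ ≠ e₁ := fun h => he₁C₀ (h ▸ he₀C₀)
  have he₀E : e₀ ∈ M.E := hC₀.1 he₀C₀
  have he₁E : e₁ ∈ M.E := hC₁.1 he₁C₁
  have he₀U : e₀ ∈ U := Or.inl he₀C₀
  have he₁U : e₁ ∈ U := Or.inr he₁C₁
  have hfU : f ∈ U := Or.inl hfC₀
  -- any subset of U avoiding e₁ and some element of C₀ is independent
  have hsub0 : ∀ T : Set α, T ⊆ U → e₁ ∉ T → ¬ C₀ ⊆ T → M.Indep T := by
    intro T hTU hT1 hTC
    by_contra hdep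
    refine hTC (lemA hI (fun h => h.2 (by simp)) he₀E hC₀ ?_ hdep ?_)
    · intro c hc
      rcases eq_or_ne c e₀ with rfl | hne
      · exact mem_insert _ _
      · exact mem_insert_of_mem _ ⟨Or.inl hc, by
          simp only [mem_insert_iff, mem_singleton_iff]
          push_neg
          exact ⟨hne, fun h => he₁C₀ (h ▸ hc)⟩⟩
    · intro t ht
      rcases eq_or_ne t e₀ with rfl | hne
      · exact mem_insert _ _
      · exact mem_insert_of_mem _ ⟨hTU ht, by
          simp only [mem_insert_iff, mem_singleton_iff]
          push_neg
          exact ⟨hne, fun h => hT1 (h ▸ ht)⟩⟩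
  have hsub1 : ∀ T : Set α, T ⊆ U → e₀ ∉ T → ¬ C₁ ⊆ T → M.Indep T := by
    intro T hTU hT0 hTC
    by_contra hdep
    refine hTC (lemA hI (fun h => h.2 (by simp)) he₁E hC₁ ?_ hdep ?_)
    · intro c hc
      rcases eq_or_ne c e₁ with rfl | hne
      · exact mem_insert _ _
      · exact mem_insert_of_mem _ ⟨Or.inr hc, by
          simp only [mem_insert_iff, mem_singleton_iff]
          push_neg
          exact ⟨fun h => he₀C₁ (h ▸ hc), hne⟩⟩
    · intro t ht
      rcases eq_or_ne t e₁ with rfl | hne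
      · exact mem_insert _ _
      · exact mem_insert_of_mem _ ⟨hTU ht, by
          simp only [mem_insert_iff, mem_singleton_iff]
          push_neg
          exact ⟨fun h => hT0 (h ▸ ht), hne⟩⟩
  -- independence of U \ {e₀, f} and U \ {e₁, f}
  have hK : M.Indep (U \ {e₀, f}) :=
    hsub1 _ diff_subset (fun h => h.2 (by simp)) (fun h => (h hfC₁).2 (by simp))
  have hK' : M.Indep (U \ {e₁, f}) :=
    hsub0 _ diff_subset (fun h => h.2 (by simp)) (fun h => (h hfC₀).2 (by simp))
  -- closure facts
  have hfclK : f ∈ M.closure (U \ {e₀, f}) := by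
    refine M.closure_subset_closure (show C₁ \ {f} ⊆ U \ {e₀, f} from ?_)
      (mcirc_mem_closure hC₁ hfC₁)
    intro c hc
    refine ⟨Or.inr hc.1, ?_⟩
    simp only [mem_insert_iff, mem_singleton_iff]
    push_neg
    exact ⟨fun h => he₀C₁ (h ▸ hc.1), fun h => hc.2 (by simp [h])⟩
  have he₀clK : e₀ ∈ M.closure (U \ {e₀, f}) := by
    have h1 : U \ {e₀} ⊆ M.closure (U \ {e₀, f}) := by
      intro c hc
      rcases eq_or_ne c f with rfl | hne
      · exact hfclK
      · refine M.subset_closure _ hK.subset_ground ⟨hc.1, ?_⟩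
        simp only [mem_insert_iff, mem_singleton_iff]
        push_neg
        exact ⟨fun h => hc.2 (by simp [h]), hne⟩
    have h2 : e₀ ∈ M.closure (U \ {e₀}) := by
      refine M.closure_subset_closure (show C₀ \ {e₀} ⊆ U \ {e₀} from ?_)
        (mcirc_mem_closure hC₀ he₀C₀)
      exact fun c hc => ⟨Or.inl hc.1, hc.2⟩
    exact M.closure_subset_closure_of_subset_closure h1 h2
  have hJdep : ¬ M.Indep (U \ {f}) := by
    intro h
    have h2 : M.Indep (insert e₀ (U \ {e₀, f})) := by
      refine h.subset ?_
      refine insert_subset ⟨he₀U, fun hh => hfe₀ (mem_singleton_iff.1 hh).symm⟩ ?_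
      intro c hc
      refine ⟨hc.1, fun hh => ?_⟩
      simp only [mem_insert_iff, mem_singleton_iff] at hc hh
      exact hc.2 (Or.inr hh)
    rw [hK.insert_indep_iff_of_notMem (fun h' => h'.2 (by simp))] at h2
    exact h2.2 he₀clK
  -- U \ {f, x} is independent for each x in the symmetric difference
  have hJx0 : ∀ x ∈ C₀ \ C₁, M.Indep (U \ {f, x}) := by
    intro x hx
    rcases eq_or_ne x e₀ with h | hxe₀
    · rw [h, show U \ {f, e₀} = U \ {e₀, f} from by
        ext c; simp only [mem_diff, mem_insert_iff, mem_singleton_iff]; tauto]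
      exact hK
    have hxe₁ : x ≠ e₁ := fun h => he₁C₀ (h ▸ hx.1)
    have hxU : x ∈ U := Or.inl hx.1
    have hT : M.Indep (U \ {f, x, e₁}) :=
      hsub0 _ diff_subset (fun h => h.2 (by simp)) (fun h => (h hfC₀).2 (by simp))
    by_contra hdep
    have hins : insert e₁ (U \ {f, x, e₁}) = U \ {f, x} := by
      ext c
      simp only [mem_insert_iff, mem_diff, mem_singleton_iff]
      constructor
      · rintro (rfl | ⟨h1, h2⟩)
        · exact ⟨he₁U, by push_neg; exact ⟨hfe₁.symm, hxe₁.symm⟩⟩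
        · push_neg at h2 ⊢; exact ⟨h1, h2.1, h2.2.1⟩
      · rintro ⟨h1, h2⟩
        push_neg at h2
        rcases eq_or_ne c e₁ with rfl | hc
        · exact Or.inl rfl
        · exact Or.inr ⟨h1, by push_neg; exact ⟨h2.1, h2.2, hc⟩⟩
    have he₁cl : e₁ ∈ M.closure (U \ {f, x, e₁}) := by
      by_contra h
      rw [hT.notMem_closure_iff_of_notMem (fun h' => h'.2 (by simp)) he₁E, hins] at h
      exact hdep h
    have hfcl : f ∈ M.closure (U \ {f, x, e₁}) := by
      have h1 : C₁ \ {f} ⊆ U \ {f, x} := by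
        intro c hc
        refine ⟨Or.inr hc.1, ?_⟩
        simp only [mem_insert_iff, mem_singleton_iff]
        push_neg
        exact ⟨fun h => hc.2 (by simp [h]), fun h => hx.2 (h ▸ hc.1)⟩
      have h2 : insert e₁ (U \ {f, x, e₁}) ⊆ M.closure (U \ {f, x, e₁}) :=
        insert_subset he₁cl (M.subset_closure _ hT.subset_ground)
      rw [← hins] at h1
      exact ((M.closure_subset_closure h1).trans
        (M.closure_subset_closure_of_subset_closure h2)) (mcirc_mem_closure hC₁ hfC₁)
    have hfins : M.Indep (insert f (U \ {f, x, e₁})) := by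
      refine hsub0 _ (insert_subset hfU diff_subset) ?_ (fun h => ?_)
      · rintro (h | h)
        · exact hfe₁ h.symm
        · exact h.2 (by simp)
      · rcases h hx.1 with h' | h'
        · exact hx.2 (h' ▸ hfC₁)
        · exact h'.2 (by simp)
    rw [hT.insert_indep_iff_of_notMem (fun h => h.2 (by simp))] at hfins
    exact hfins.2 hfcl
  have hJx1 : ∀ x ∈ C₁ \ C₀, M.Indep (U \ {f, x}) := by
    intro x hx
    rcases eq_or_ne x e₁ with h | hxe₁
    · rw [h, show U \ {f, e₁} = U \ {e₁, f} from by
        ext c; simp only [mem_diff, mem_insert_iff, mem_singleton_iff]; tauto]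
      exact hK'
    have hxe₀ : x ≠ e₀ := fun h => he₀C₁ (h ▸ hx.1)
    have hxU : x ∈ U := Or.inr hx.1
    have hT : M.Indep (U \ {f, x, e₀}) :=
      hsub1 _ diff_subset (fun h => h.2 (by simp)) (fun h => (h hfC₁).2 (by simp))
    by_contra hdep
    have hins : insert e₀ (U \ {f, x, e₀}) = U \ {f, x} := by
      ext c
      simp only [mem_insert_iff, mem_diff, mem_singleton_iff]
      constructor
      · rintro (rfl | ⟨h1, h2⟩)
        · exact ⟨he₀U, by push_neg; exact ⟨hfe₀.symm, hxe₀.symm⟩⟩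
        · push_neg at h2 ⊢; exact ⟨h1, h2.1, h2.2.1⟩
      · rintro ⟨h1, h2⟩
        push_neg at h2
        rcases eq_or_ne c e₀ with rfl | hc
        · exact Or.inl rfl
        · exact Or.inr ⟨h1, by push_neg; exact ⟨h2.1, h2.2, hc⟩⟩
    have he₀cl : e₀ ∈ M.closure (U \ {f, x, e₀}) := by
      by_contra h
      rw [hT.notMem_closure_iff_of_notMem (fun h' => h'.2 (by simp)) he₀E, hins] at h
      exact hdep h
    have hfcl : f ∈ M.closure (U \ {f, x, e₀}) := by
      have h1 : C₀ \ {f} ⊆ U \ {f, x} := by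
        intro c hc
        refine ⟨Or.inl hc.1, ?_⟩
        simp only [mem_insert_iff, mem_singleton_iff]
        push_neg
        exact ⟨fun h => hc.2 (by simp [h]), fun h => hx.2 (h ▸ hc.1)⟩
      have h2 : insert e₀ (U \ {f, x, e₀}) ⊆ M.closure (U \ {f, x, e₀}) :=
        insert_subset he₀cl (M.subset_closure _ hT.subset_ground)
      rw [← hins] at h1
      exact ((M.closure_subset_closure h1).trans
        (M.closure_subset_closure_of_subset_closure h2)) (mcirc_mem_closure hC₀ hfC₀)
    have hfins : M.Indep (insert f (U \ {f, x, e₀})) := by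
      refine hsub1 _ (insert_subset hfU diff_subset) ?_ (fun h => ?_)
      · rintro (h | h)
        · exact hfe₀ h.symm
        · exact h.2 (by simp)
      · rcases h hx.1 with h' | h'
        · exact hx.2 (h' ▸ hfC₀)
        · exact h'.2 (by simp)
    rw [hT.insert_indep_iff_of_notMem (fun h => h.2 (by simp))] at hfins
    exact hfins.2 hfcl
  -- every circuit inside U \ {f} contains the symmetric difference
  have hall : ∀ C, MCircuit M C → C ⊆ U \ {f} → (C₀ \ C₁) ∪ (C₁ \ C₀) ⊆ C := by
    intro C hC hCs x hx
    by_contra hxC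
    have hind : M.Indep (U \ {f, x}) := by
      rcases hx with h | h
      exacts [hJx0 x h, hJx1 x h]
    refine hC.2.1 (hind.subset fun c hc => ⟨(hCs hc).1, ?_⟩)
    simp only [mem_insert_iff, mem_singleton_iff]
    push_neg
    exact ⟨fun h => (hCs hc).2 (by simp [h]), fun h => hxC (h ▸ hc)⟩
  -- uniqueness
  have huniq : ∀ C C', MCircuit M C → C ⊆ U \ {f} → MCircuit M C' → C' ⊆ U \ {f} → C ⊆ C' := by
    intro C C' hC hCs hC' hCs'
    have hA : M.Indep ((C ∪ C') \ {e₀}) := by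
      refine hK.subset fun c hc => ?_
      have hcU : c ∈ U \ {f} := by rcases hc.1 with h | h; exacts [hCs h, hCs' h]
      refine ⟨hcU.1, ?_⟩
      simp only [mem_insert_iff, mem_singleton_iff]
      push_neg
      exact ⟨fun h => hc.2 (by simp [h]), fun h => hcU.2 (by simp [h])⟩
    refine lemA hA (fun h => h.2 (by simp)) he₀E hC ?_ hC'.2.1 ?_
    · intro c hc
      rcases eq_or_ne c e₀ with rfl | h
      · exact mem_insert _ _
      · exact mem_insert_of_mem _ ⟨Or.inl hc, by simpa using h⟩
    · intro c hc
      rcases eq_or_ne c e₀ with rfl | h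
      · exact mem_insert _ _
      · exact mem_insert_of_mem _ ⟨Or.inr hc, by simpa using h⟩
  -- existence : fundamental circuit of e₀ over U \ {e₀, f}
  set S : Set (Set α) := {T | T ⊆ U \ {e₀, f} ∧ e₀ ∈ M.closure T} with hSdef
  have hKS : U \ {e₀, f} ∈ S := ⟨Subset.rfl, he₀clK⟩
  have hSne : S.Nonempty := ⟨_, hKS⟩
  have hiS : ⋂₀ S ⊆ U \ {e₀, f} := sInter_subset_of_mem hKS
  have hiSind : M.Indep (⋂₀ S) := hK.subset hiS
  have he₀iS : e₀ ∈ M.closure (⋂₀ S) := by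
    rw [hK.closure_sInter_eq_biInter_closure_of_forall_subset hSne (fun T hT => hT.1)]
    exact mem_iInter₂.2 fun T hT => hT.2
  have he₀niS : e₀ ∉ ⋂₀ S := fun h => (hiS h).2 (by simp)
  have hCc : MCircuit M (insert e₀ (⋂₀ S)) := by
    refine ⟨insert_subset he₀E hiSind.subset_ground, ?_, ?_⟩
    · intro h
      rw [hiSind.insert_indep_iff_of_notMem he₀niS] at h
      exact h.2 he₀iS
    · intro P hP
      obtain ⟨x, hxC, hxP⟩ := exists_of_ssubset hP
      have hPs : P ⊆ insert e₀ (⋂₀ S) \ {x} := subset_diff_singleton hP.subset hxP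
      rcases eq_or_ne x e₀ with rfl | hxe
      · refine hiSind.subset (hPs.trans ?_)
        intro c hc
        rcases hc.1 with h | h
        · exact absurd (by simpa using h) (by simpa using hc.2)
        · exact h
      · have hxS : x ∈ ⋂₀ S := by
          rcases hxC with h | h
          · exact absurd h hxe
          · exact h
        have hind : M.Indep (insert e₀ (⋂₀ S \ {x})) := by
          by_contra hdep
          have h1 : M.Indep (⋂₀ S \ {x}) := hiSind.subset diff_subset
          have hx' : e₀ ∈ M.closure (⋂₀ S \ {x}) := by
            by_contra h
            rw [h1.notMem_closure_iff_of_notMem (fun hh => he₀niS hh.1) he₀E] at h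
            exact hdep h
          have hmem : ⋂₀ S \ {x} ∈ S := ⟨diff_subset.trans hiS, hx'⟩
          exact (sInter_subset_of_mem hmem hxS).2 rfl
        refine hind.subset (hPs.trans ?_)
        intro c hc
        rcases hc.1 with h | h
        · exact h ▸ mem_insert _ _
        · exact mem_insert_of_mem _ ⟨h, hc.2⟩
  have hCcs : insert e₀ (⋂₀ S) ⊆ U \ {f} := by
    refine insert_subset ⟨he₀U, fun h => hfe₀ (mem_singleton_iff.1 h).symm⟩ ?_
    refine hiS.trans fun c hc => ⟨hc.1, fun h => hc.2 ?_⟩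
    simp only [mem_singleton_iff] at h
    simp [h]
  exact ⟨⟨insert e₀ (⋂₀ S), ⟨hCc, hCcs⟩, fun C' h =>
    Subset.antisymm (huniq _ _ h.1 h.2 hCc hCcs) (huniq _ _ hCc hCcs h.1 h.2)⟩, hall⟩
end

section
/- Let M be a matroid, B a base of M, e₀ and e₁ distinct elements of E \ B, and f an element of C_M(e₀,B) ∩ C_M(e₁,B). Let B' := (B ∪ {e₀}) \ {f}. Then B' is a base of M and C_M(e₀,B) △ C_M(e₁,B) ⊆ C_M(e₁,B') ⊆ (C_M(e₀,B) ∪ C_M(e₁,B)) \ {f}. -/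
open Set

variable {α : Type*}

/-- `C` is the fundamental circuit of `e` with respect to `B`. -/
def FundCircuit (M : Matroid α) (e : α) (B C : Set α) : Prop :=
  MCircuit M C ∧ e ∈ C ∧ C ⊆ insert e B

lemma MCircuit.diff_indep {M : Matroid α} {C : Set α} {x : α} (h : MCircuit M C) (hx : x ∈ C) :
    M.Indep (C \ {x}) :=
  h.2.2 _ (sdiff_singleton_ssubset.2 hx)

lemma MCircuit.mem_closure_diff {M : Matroid α} {C : Set α} {x : α} (h : MCircuit M C)
    (hx : x ∈ C) : x ∈ M.closure (C \ {x}) := by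
  have hi := h.diff_indep hx
  have hd : M.Dep (insert x (C \ {x})) := by
    rw [insert_diff_singleton, insert_eq_of_mem hx]
    exact ⟨h.2.1, h.1⟩
  exact (hi.insert_dep_iff.1 hd).1

lemma closure_insert_insert {M : Matroid α} {a b : α} {X : Set α} (ha : a ∈ M.closure X)
    (hb : b ∈ M.closure X) : M.closure (insert a (insert b X)) = M.closure X := by
  rw [Matroid.closure_insert_eq_of_mem_closure
      (by rwa [Matroid.closure_insert_eq_of_mem_closure hb]),
    Matroid.closure_insert_eq_of_mem_closure hb]

lemma exists_fundCircuit {M : Matroid α} {I : Set α} {e : α} (hI : M.Indep I)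
    (he : e ∈ M.closure I) (heI : e ∉ I) : ∃ C, FundCircuit M e I C := by
  set S : Set (Set α) := {J | J ⊆ I ∧ e ∈ M.closure J} with hS
  have hIS : I ∈ S := ⟨Subset.rfl, he⟩
  set K := ⋂₀ S with hK
  have hKI : K ⊆ I := sInter_subset_of_mem hIS
  have hKind : M.Indep K := hI.subset hKI
  have heK : e ∈ M.closure K := by
    rw [hK, hI.closure_sInter_eq_biInter_closure_of_forall_subset ⟨I, hIS⟩ (fun J hJ => hJ.1)]
    exact mem_iInter₂.2 fun J hJ => hJ.2
  have heK' : e ∉ K := fun h => heI (hKI h)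
  have hdep : M.Dep (insert e K) := hKind.insert_dep_iff.2 ⟨heK, heK'⟩
  refine ⟨insert e K, ⟨hdep.2, hdep.1, ?_⟩, mem_insert _ _, insert_subset_insert hKI⟩
  intro D hD
  by_cases heD : e ∈ D
  · have hDK : D \ {e} ⊆ K := fun x hx =>
      (hD.subset hx.1).resolve_left (fun h => hx.2 (by simp [h]))
    have hecl : e ∉ M.closure (D \ {e}) := by
      intro hcl
      refine hD.not_subset ?_
      have hKD : K ⊆ D \ {e} := sInter_subset_of_mem ⟨hDK.trans hKI, hcl⟩
      exact insert_subset heD ((hKD.trans diff_subset))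
    have hind : M.Indep (insert e (D \ {e})) :=
      ((hKind.subset hDK).insert_indep_iff_of_notMem (fun h => h.2 rfl)).2
        ⟨M.mem_ground_of_mem_closure he, hecl⟩
    rwa [insert_diff_singleton, insert_eq_of_mem heD] at hind
  · exact hKind.subset fun x hx => (hD.subset hx).resolve_left (fun h => heD (h ▸ hx))

/-- Any circuit contained in `insert e B` with `B` independent contains `e`. -/
lemma mem_of_mcircuit_subset_insert {M : Matroid α} {B C : Set α} {e : α} (hB : M.Indep B)
    (hC : MCircuit M C) (hCs : C ⊆ insert e B) : e ∈ C := by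
  by_contra h
  exact hC.2.1 (hB.subset fun x hx => (hCs hx).resolve_left (fun hh => h (hh ▸ hx)))

/-- Any two circuits contained in `insert e B` with `B` independent are comparable. -/
lemma mcircuit_subset_of_subset_insert {M : Matroid α} {B C C' : Set α} {e : α}
    (hB : M.Indep B) (hC : MCircuit M C) (hCs : C ⊆ insert e B)
    (hC' : MCircuit M C') (hC's : C' ⊆ insert e B) : C ⊆ C' := by
  have heC' : e ∈ C' := mem_of_mcircuit_subset_insert hB hC' hC's
  intro x hx
  by_contra hx'
  have hxe : x ≠ e := fun h => hx' (h ▸ heC')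
  have hxB : x ∈ B := (hCs hx).resolve_left hxe
  have h1 : e ∈ M.closure (B \ {x}) :=
    M.closure_subset_closure
      (fun y hy => ⟨(hC's hy.1).resolve_left (by simpa using hy.2), fun hh => hx' (by
        simpa using hh ▸ hy.1)⟩ : C' \ {e} ⊆ B \ {x}) (hC'.mem_closure_diff heC')
  have h3 : C \ {x} ⊆ insert e (B \ {x}) := fun y hy => by
    rcases hCs hy.1 with h | h
    · exact Or.inl h
    · exact Or.inr ⟨h, hy.2⟩
  have h4 : x ∈ M.closure (B \ {x}) := by
    have := (M.closure_subset_closure h3) (hC.mem_closure_diff hx)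
    rwa [Matroid.closure_insert_eq_of_mem_closure h1] at this
  exact hB.notMem_closure_sdiff_of_mem hxB h4

/-- Base exchange: with `B' := (B ∪ {e₀}) \ {f}` for `f ∈ C_M(e₀,B) ∩ C_M(e₁,B)`, `B'` is a
base and `C_M(e₀,B) △ C_M(e₁,B) ⊆ C_M(e₁,B') ⊆ (C_M(e₀,B) ∪ C_M(e₁,B)) \ {f}`. -/
theorem stmt5 (M : Matroid α) (B : Set α) (hB : M.IsBase B)
    (e₀ e₁ : α) (he₀ : e₀ ∈ M.E \ B) (he₁ : e₁ ∈ M.E \ B) (hne : e₀ ≠ e₁)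
    (C₀ C₁ : Set α) (hC₀ : FundCircuit M e₀ B C₀) (hC₁ : FundCircuit M e₁ B C₁)
    (f : α) (hf : f ∈ C₀ ∩ C₁) :
    M.IsBase (insert e₀ B \ {f}) ∧
      ∃ C₁', FundCircuit M e₁ (insert e₀ B \ {f}) C₁' ∧
        (C₀ \ C₁) ∪ (C₁ \ C₀) ⊆ C₁' ∧ C₁' ⊆ (C₀ ∪ C₁) \ {f} := by
  obtain ⟨hC₀c, he₀C₀, hC₀s⟩ := hC₀
  obtain ⟨hC₁c, he₁C₁, hC₁s⟩ := hC₁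
  obtain ⟨hfC₀, hfC₁⟩ := hf
  have hBi : M.Indep B := hB.indep
  have hfe₀ : f ≠ e₀ := by
    rintro rfl
    rcases hC₁s hfC₁ with h | h
    · exact hne h
    · exact he₀.2 h
  have hfe₁ : f ≠ e₁ := by
    rintro rfl
    rcases hC₀s hfC₀ with h | h
    · exact hne h.symm
    · exact he₁.2 h
  have hfB : f ∈ B := (hC₀s hfC₀).resolve_left hfe₀
  have he₁C₀ : e₁ ∉ C₀ := fun h => by
    rcases hC₀s h with h' | h'
    · exact hne h'.symm
    · exact he₁.2 h'
  set B' : Set α := insert e₀ B \ {f} with hB'def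
  have hB'eq : B' = insert e₀ (B \ {f}) := by
    rw [hB'def, insert_diff_singleton_comm (Ne.symm hfe₀)]
  have hC₀B' : C₀ \ {f} ⊆ B' := fun x hx => ⟨hC₀s hx.1, hx.2⟩
  -- B' is independent
  have he₀cl : e₀ ∉ M.closure (B \ {f}) := by
    intro hcl
    have hsub : C₀ \ {f} ⊆ insert e₀ (B \ {f}) := hB'eq ▸ hC₀B'
    have : f ∈ M.closure (B \ {f}) := by
      have := (M.closure_subset_closure hsub) (hC₀c.mem_closure_diff hfC₀)
      rwa [Matroid.closure_insert_eq_of_mem_closure hcl] at this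
    exact hBi.notMem_closure_sdiff_of_mem hfB this
  have hB'i : M.Indep B' := by
    rw [hB'eq]
    exact ((hBi.subset diff_subset).insert_indep_iff_of_notMem
      (fun h => he₀.2 h.1)).2 ⟨he₀.1, he₀cl⟩
  -- B' is spanning, hence a base
  have hfcl : f ∈ M.closure B' :=
    (M.closure_subset_closure hC₀B') (hC₀c.mem_closure_diff hfC₀)
  have hB'base : M.IsBase B' := by
    refine hB'i.isBase_of_ground_subset_closure ?_
    have hBsub : B ⊆ insert f B' := fun x hx => by
      by_cases hxf : x = f
      · exact Or.inl hxf
      · exact Or.inr ⟨Or.inr hx, hxf⟩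
    calc M.E = M.closure B := hB.closure_eq.symm
      _ ⊆ M.closure (insert f B') := M.closure_subset_closure hBsub
      _ = M.closure B' := Matroid.closure_insert_eq_of_mem_closure hfcl
  have he₁B' : e₁ ∉ B' := fun h => by
    rcases h.1 with h' | h'
    · exact hne h'.symm
    · exact he₁.2 h'
  -- the fundamental circuit C₁' of e₁ w.r.t. B'
  obtain ⟨C₁', hC₁'c, he₁C₁', hC₁'s⟩ :=
    exists_fundCircuit hB'i (hB'base.closure_eq.symm ▸ he₁.1) he₁B'
  -- upper bound
  set I₂ : Set α := ((C₀ ∪ C₁) \ {f}) \ {e₁} with hI₂def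
  have hI₂B' : I₂ ⊆ B' := fun x hx => by
    rcases hx.1.1 with h | h
    · exact ⟨hC₀s h, hx.1.2⟩
    · rcases hC₁s h with h' | h'
      · exact absurd h' hx.2
      · exact ⟨Or.inr h', hx.1.2⟩
  have hI₂i : M.Indep I₂ := hB'i.subset hI₂B'
  have hfclI₂ : f ∈ M.closure I₂ := by
    have hsub : C₀ \ {f} ⊆ I₂ := fun x hx =>
      ⟨⟨Or.inl hx.1, hx.2⟩, fun hh => he₁C₀ (mem_singleton_iff.1 hh ▸ hx.1)⟩
    exact (M.closure_subset_closure hsub) (hC₀c.mem_closure_diff hfC₀)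
  have he₁clI₂ : e₁ ∈ M.closure I₂ := by
    have hsub : C₁ \ {e₁} ⊆ insert f I₂ := fun x hx => by
      by_cases hxf : x = f
      · exact Or.inl hxf
      · exact Or.inr ⟨⟨Or.inr hx.1, hxf⟩, hx.2⟩
    have := (M.closure_subset_closure hsub) (hC₁c.mem_closure_diff he₁C₁)
    rwa [Matroid.closure_insert_eq_of_mem_closure hfclI₂] at this
  obtain ⟨C'', hC''c, he₁C'', hC''s⟩ :=
    exists_fundCircuit hI₂i he₁clI₂ (fun h => h.2 rfl)
  have hupper : C₁' ⊆ (C₀ ∪ C₁) \ {f} := by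
    have hsubC'' : C₁' ⊆ C'' :=
      mcircuit_subset_of_subset_insert hB'i hC₁'c hC₁'s hC''c
        (hC''s.trans (insert_subset_insert hI₂B'))
    intro x hx
    rcases hC''s (hsubC'' hx) with h | h
    · exact h ▸ ⟨Or.inr he₁C₁, fun hh => hfe₁ (mem_singleton_iff.1 hh).symm⟩
    · exact h.1
  have hfC₁' : f ∉ C₁' := fun h => (hupper h).2 rfl
  have he₀C₁' : e₀ ∈ C₁' := by
    by_contra he₀C₁'
    have hsubB : C₁' ⊆ insert e₁ B := fun x hx => by
      rcases hC₁'s hx with h | h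
      · exact Or.inl h
      · rcases h.1 with h' | h'
        · exact absurd (h' ▸ hx) he₀C₁'
        · exact Or.inr h'
    have hsub : C₁ ⊆ C₁' :=
      mcircuit_subset_of_subset_insert hBi hC₁c hC₁s hC₁'c hsubB
    exact hfC₁' (hsub hfC₁)
  refine ⟨hB'base, C₁', ⟨hC₁'c, he₁C₁', hC₁'s⟩, ?_, hupper⟩
  -- lower bound
  rintro g (⟨hg0, hg1⟩ | ⟨hg1, hg0⟩) <;> by_contra hgC₁'
  · -- g ∈ C₀ \ C₁
    have hge₀ : g ≠ e₀ := fun h => hgC₁' (h ▸ he₀C₁')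
    have hgf : g ≠ f := fun h => hg1 (h ▸ hfC₁)
    have hgB : g ∈ B := (hC₀s hg0).resolve_left hge₀
    have hgB' : g ∈ B' := ⟨Or.inr hgB, hgf⟩
    set A : Set α := B' \ {g} with hAdef
    have he₁A : e₁ ∈ M.closure A := by
      have hsub : C₁' \ {e₁} ⊆ A := fun x hx =>
        ⟨(hC₁'s hx.1).resolve_left hx.2,
          fun hh => hgC₁' (mem_singleton_iff.1 hh ▸ hx.1)⟩
      exact (M.closure_subset_closure hsub) (hC₁'c.mem_closure_diff he₁C₁')
    have hfA : f ∈ M.closure A := by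
      have hsub : C₁ \ {f} ⊆ insert e₁ A := fun x hx => by
        rcases hC₁s hx.1 with h | h
        · exact Or.inl h
        · exact Or.inr ⟨⟨Or.inr h, hx.2⟩, fun hh => hg1 (mem_singleton_iff.1 hh ▸ hx.1)⟩
      have := (M.closure_subset_closure hsub) (hC₁c.mem_closure_diff hfC₁)
      rwa [Matroid.closure_insert_eq_of_mem_closure he₁A] at this
    have hgA : g ∈ M.closure A := by
      have hsub : C₀ \ {g} ⊆ insert f A := fun x hx => by
        by_cases hxf : x = f
        · exact Or.inl hxf
        · exact Or.inr ⟨⟨hC₀s hx.1, hxf⟩, hx.2⟩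
      have := (M.closure_subset_closure hsub) (hC₀c.mem_closure_diff hg0)
      rwa [Matroid.closure_insert_eq_of_mem_closure hfA] at this
    exact hB'i.notMem_closure_sdiff_of_mem hgB' hgA
  · -- g ∈ C₁ \ C₀
    have hge₁ : g ≠ e₁ := fun h => hgC₁' (h ▸ he₁C₁')
    have hgf : g ≠ f := fun h => hg0 (h ▸ hfC₀)
    have hgB : g ∈ B := (hC₁s hg1).resolve_left hge₁
    have hgB' : g ∈ B' := ⟨Or.inr hgB, hgf⟩
    set A : Set α := B' \ {g} with hAdef
    have he₁A : e₁ ∈ M.closure A := by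
      have hsub : C₁' \ {e₁} ⊆ A := fun x hx =>
        ⟨(hC₁'s hx.1).resolve_left hx.2,
          fun hh => hgC₁' (mem_singleton_iff.1 hh ▸ hx.1)⟩
      exact (M.closure_subset_closure hsub) (hC₁'c.mem_closure_diff he₁C₁')
    have hfA : f ∈ M.closure A := by
      have hsub : C₀ \ {f} ⊆ A := fun x hx =>
        ⟨⟨hC₀s hx.1, hx.2⟩, fun hh => hg0 (mem_singleton_iff.1 hh ▸ hx.1)⟩
      exact (M.closure_subset_closure hsub) (hC₀c.mem_closure_diff hfC₀)
    have hgA : g ∈ M.closure A := by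
      have hsub : C₁ \ {g} ⊆ insert e₁ (insert f A) := fun x hx => by
        rcases hC₁s hx.1 with h | h
        · exact Or.inl h
        · by_cases hxf : x = f
          · exact Or.inr (Or.inl hxf)
          · exact Or.inr (Or.inr ⟨⟨Or.inr h, hxf⟩, hx.2⟩)
      have := (M.closure_subset_closure hsub) (hC₁c.mem_closure_diff hg1)
      rwa [closure_insert_insert he₁A hfA] at this
    exact hB'i.notMem_closure_sdiff_of_mem hgB' hgA
end

section
/- Let M and N be matroids on a common ground set E, let A ⊆ E, and let H be an (M \ A, N/A)-hindrance, i.e., H is independent but not spanning in (N/A).span_{M\A}(H). Then H is also an (M,N)-hindrance, i.e., H is independent but not spanning in N.span_M(H). -/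
open Set Matroid

variable {α : Type*}

/-- The deletion `M \ A`: the restriction of `M` to `M.E \ A`. -/
def mdelete (M : Matroid α) (A : Set α) : Matroid α := M ↾ (M.E \ A)

/-- The contraction `M / A`, defined via duality. -/
def mcontract (M : Matroid α) (A : Set α) : Matroid α := (mdelete M✶ A)✶

/-- `N.X := N / (N.E \ X)`: contraction of the complement of `X`. -/
def mdot (N : Matroid α) (X : Set α) : Matroid α := mcontract N (N.E \ X)

/-- `H` is an `(M,N)`-hindrance: `H` is independent but not spanning
in `N.span_M(H)`. -/
def Hindrance (M N : Matroid α) (H : Set α) : Prop :=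
  (mdot N (M.closure H)).Indep H ∧ ¬ (mdot N (M.closure H)).Spanning H

/-- The rank of a matroid: the (common) cardinality of its bases. -/
noncomputable def mrank (M : Matroid α) : Cardinal :=
  ⨆ B : {B : Set α // M.IsBase B}, Cardinal.mk B.1

@[simp] lemma mcontract_ground (N : Matroid α) (C : Set α) :
    (mcontract N C).E = N.E \ C := rfl

lemma mcontract_dual (N : Matroid α) (C : Set α) :
    (mcontract N C)✶ = N✶ ↾ (N.E \ C) := by
  simp [mcontract, mdelete]

lemma mcontract_congr (N : Matroid α) {C C' : Set α} (h : N.E \ C = N.E \ C') :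
    mcontract N C = mcontract N C' := by
  simp only [mcontract, mdelete, dual_ground, h]

lemma mcontract_mcontract (N : Matroid α) (C₁ C₂ : Set α) :
    mcontract (mcontract N C₁) C₂ = mcontract N (C₁ ∪ C₂) := by
  have h1 : (mcontract N C₁)✶ = N✶ ↾ (N.E \ C₁) := mcontract_dual N C₁
  simp only [mcontract, mdelete, dual_inj] at *
  rw [h1, restrict_ground_eq, restrict_restrict_eq _ diff_subset, diff_diff, dual_ground]

lemma indep_of_mcontract {P : Matroid α} {A H : Set α}
    (h : (mcontract P A).Indep H) : P.Indep H := by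
  rw [mcontract, mdelete, dual_indep_iff_exists', restrict_ground_eq] at h
  obtain ⟨hHE, B, hB, hdisj⟩ := h
  rw [isBase_restrict_iff (show P✶.E \ A ⊆ P✶.E from diff_subset)] at hB
  obtain ⟨B', hB', rfl⟩ := hB.exists_isBase
  have : P✶✶.Indep H := by
    rw [dual_indep_iff_exists']
    exact ⟨hHE.trans diff_subset, B', hB',
      disjoint_left.mpr fun x hxH hxB' => disjoint_left.mp hdisj hxH ⟨hxB', hHE hxH⟩⟩
  rwa [dual_dual] at this

lemma spanning_mcontract {P : Matroid α} {A S : Set α}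
    (hS : P.Spanning S) (hSA : Disjoint S A) : (mcontract P A).Spanning S := by
  have hSE : S ⊆ (mcontract P A).E := by
    rw [mcontract_ground]
    exact subset_diff.mpr ⟨hS.subset_ground, hSA⟩
  rw [spanning_iff_compl_coindep hSE, mcontract_ground, coindep_def, mcontract_dual,
    restrict_indep_iff]
  refine ⟨?_, diff_subset⟩
  have h1 : P.Coindep (P.E \ S) := (spanning_iff_compl_coindep hS.subset_ground).mp hS
  exact h1.indep.subset (diff_subset_diff_left diff_subset)

lemma restrict_closure_eq' {M : Matroid α} {R X : Set α} (hXR : X ⊆ R) (hR : R ⊆ M.E) :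
    (M ↾ R).closure X = M.closure X ∩ R := by
  obtain ⟨I, hI⟩ := (M ↾ R).exists_isBasis X (by rwa [restrict_ground_eq])
  have hIM : M.IsBasis I X := ((isBasis_restrict_iff hR).mp hI).1
  have hIR : I ⊆ R := hI.subset.trans hXR
  rw [← hI.closure_eq_closure, ← hIM.closure_eq_closure]
  ext x
  have hind : (M ↾ R).Indep I := hI.indep
  rw [hind.mem_closure_iff, mem_inter_iff, hIM.indep.mem_closure_iff, restrict_dep_iff,
    dep_iff]
  simp only [insert_subset_iff]
  constructor
  · rintro (⟨hni, hxR, hIR'⟩ | hxI)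
    · exact ⟨Or.inl ⟨hni, hR hxR, hIR'.trans hR⟩, hxR⟩
    · exact ⟨Or.inr hxI, hIR hxI⟩
  · rintro ⟨(⟨hni, -, -⟩ | hxI), hxR⟩
    · exact Or.inl ⟨hni, hxR, hIR⟩
    · exact Or.inr hxI

/-- Every `(M \ A, N / A)`-hindrance is an `(M,N)`-hindrance. -/
theorem stmt8 (M N : Matroid α) (hE : M.E = N.E) (A : Set α) (hA : A ⊆ M.E)
    (H : Set α) (h : Hindrance (mdelete M A) (mcontract N A) H) :
    Hindrance M N H := by
  obtain ⟨h1, h2⟩ := h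
  set F := (mdelete M A).closure H with hF
  have hFsub : F ⊆ M.E \ A := (mdelete M A).closure_subset_ground H
  have hHF : H ⊆ F := by
    intro x hx
    have hxg := h1.subset_ground hx
    rw [mdot, mcontract_ground, mcontract_ground] at hxg
    obtain ⟨h3, h4⟩ := hxg
    by_contra hxF
    exact h4 ⟨h3, hxF⟩
  have hHMA : H ⊆ M.E \ A := hHF.trans hFsub
  have hFeq : F = M.closure H ∩ (M.E \ A) := restrict_closure_eq' hHMA diff_subset
  have hkey : mdot (mcontract N A) F = mcontract (mdot N (M.closure H)) A := by
    rw [mdot, mdot, mcontract_ground, mcontract_mcontract, mcontract_mcontract]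
    apply mcontract_congr
    rw [hFeq, hE]
    ext x
    simp only [mem_diff, mem_union, mem_inter_iff]
    tauto
  rw [hkey] at h1 h2
  exact ⟨indep_of_mcontract h1,
    fun hsp => h2 (spanning_mcontract hsp (subset_diff.mp hHMA).2)⟩
end

section
/- Let M be a finitary matroid, B a base of M, H ⊆ E \ B with |H| = κ an uncountable regular cardinal, and B' ⊆ B with |B'| < κ such that C_M(e,B) ∩ B' ≠ ∅ for every e ∈ H. Then there exist e* ∈ H, a set K with e* ∈ K ⊆ C_M(e*,B) \ B', and a family (D_α)_{α<κ} of κ pairwise distinct circuits of M forming a Δ-system with kernel K (i.e., D_α ∩ D_β = K for α ≠ β) such that ⋃_α D_α ⊆ ⋃_{e∈H} C_M(e,B). -/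
open Set

variable {α : Type*}

section Helpers
open Cardinal

namespace Stmt9Aux

universe v
variable {β : Type v}

lemma myPigeon {β γ : Type v} {κ : Cardinal.{v}} (hreg : κ.IsRegular)
    (S : Set β) (hS : #S = κ) (f : β → γ) (hsmall : #(f '' S) < κ) :
    ∃ c, #{x : β | x ∈ S ∧ f x = c} = κ := by
  by_contra h
  push_neg at h
  have h1 : ∀ c, #{x : β | x ∈ S ∧ f x = c} < κ := by
    intro c
    rcases lt_or_ge (#{x : β | x ∈ S ∧ f x = c}) κ with h' | h'
    · exact h'
    · exact ((h c) (le_antisymm (le_trans (mk_le_mk_of_subset (by intro x hx; exact hx.1)) hS.le) h')).elim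
  have hcover : S ⊆ ⋃ c ∈ f '' S, {x : β | x ∈ S ∧ f x = c} := by
    intro x hx
    simp only [mem_iUnion]
    exact ⟨f x, ⟨x, hx, rfl⟩, hx, rfl⟩
  have hb := (mk_le_mk_of_subset hcover).trans
    (mk_biUnion_le (fun c => {x : β | x ∈ S ∧ f x = c}) (f '' S))
  rw [hS] at hb
  have hsup : ⨆ c : (f '' S), #{x : β | x ∈ S ∧ f x = c} < κ :=
    Cardinal.iSup_lt_of_isRegular hreg hsmall (fun c => h1 c)
  exact absurd hb (not_le.mpr (Cardinal.mul_lt_of_lt hreg.aleph0_le hsmall hsup))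

lemma myDiff {κ : Cardinal.{v}} (hreg : κ.IsRegular) {S G : Set β}
    (hS : #S = κ) (hG : #G < κ) : #(S \ G : Set β) = κ := by
  have h1 : #S ≤ #(S \ G : Set β) + #G := le_mk_diff_add_mk S G
  rcases lt_or_ge (#(S \ G : Set β)) κ with h | h
  · exfalso
    have := Cardinal.add_lt_of_lt hreg.aleph0_le h hG
    rw [hS] at h1
    exact absurd (h1.trans_lt this) (lt_irrefl κ)
  · exact le_antisymm (hS ▸ mk_le_mk_of_subset diff_subset) h

lemma mySUnion {κ : Cardinal.{v}} (hreg : κ.IsRegular) (hunc : ℵ₀ < κ)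
    {𝒜 : Set (Set β)} (h𝒜 : #𝒜 < κ) (hfin : ∀ A ∈ 𝒜, A.Finite) :
    #(⋃₀ 𝒜 : Set β) < κ := by
  refine (mk_sUnion_le 𝒜).trans_lt (Cardinal.mul_lt_of_lt hreg.aleph0_le h𝒜 ?_)
  refine (Cardinal.iSup_lt_of_isRegular hreg h𝒜 ?_)
  intro s
  have : (s : Set β).Finite := hfin s s.2
  exact lt_trans this.lt_aleph0 hunc

lemma myPigeonFin {β γ : Type v} {κ : Cardinal.{v}} (hreg : κ.IsRegular) (hunc : ℵ₀ < κ)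
    (S : Set β) (hS : #S = κ) (f : β → γ) (hsmall : (f '' S).Finite) :
    ∃ c, #{x : β | x ∈ S ∧ f x = c} = κ :=
  myPigeon hreg S hS f (hsmall.lt_aleph0.trans hunc)

lemma myPigeonNat {β : Type v} {κ : Cardinal.{v}} (hreg : κ.IsRegular) (hunc : ℵ₀ < κ)
    (S : Set β) (hS : #S = κ) (f : β → ℕ) :
    ∃ n, #{x : β | x ∈ S ∧ f x = n} = κ := by
  have hinf : Infinite β := by
    have h1 : ℵ₀ ≤ #S := hS ▸ hreg.aleph0_le
    have h2 : Infinite ↥S := Cardinal.infinite_iff.mpr h1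
    have h3 : S.Infinite := Set.infinite_coe_iff.mp h2
    exact Set.infinite_univ_iff.mp (h3.mono (subset_univ _))
  let emb := Infinite.natEmbedding β
  have hsm : #((emb ∘ f) '' S) < κ := by
    have h4 : ((emb ∘ f) '' S) = emb '' (f '' S) := by rw [image_comp]
    have h5 : (emb '' (f '' S)).Countable := (Set.to_countable (f '' S)).image emb
    calc #((emb ∘ f) '' S) ≤ ℵ₀ := by
          rw [h4]; have := h5.to_subtype; exact Cardinal.mk_le_aleph0
      _ < κ := hunc
  obtain ⟨c, hc⟩ := myPigeon hreg S hS (emb ∘ f) hsm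
  have hne : {x : β | x ∈ S ∧ (emb ∘ f) x = c}.Nonempty := by
    rw [← Set.nonempty_coe_sort]
    refine Cardinal.mk_ne_zero_iff.mp ?_
    rw [hc]; exact hreg.pos.ne'
  obtain ⟨x₀, hx₀⟩ := hne
  refine ⟨f x₀, ?_⟩
  have hset : {x : β | x ∈ S ∧ f x = f x₀} = {x : β | x ∈ S ∧ (emb ∘ f) x = c} := by
    ext x
    simp only [mem_setOf_eq, and_congr_right_iff]
    intro _
    rw [← hx₀.2]
    exact ⟨fun h => by simp [Function.comp, h], fun h => emb.injective h⟩
  rw [hset, hc]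

lemma encard_eq_ncard {s : Set β} (h : s.Finite) : s.encard = (s.ncard : ℕ∞) := by
  rw [Set.ncard_def]; exact h.encard_eq_coe

section MatroidFacts
variable {M : Matroid β} {C C₁ C₂ X Y I Dd S Q B A D : Set β} {e x y : β}

lemma mcirc_finite [M.Finitary] (hC : MCircuit M C) : C.Finite := by
  by_contra hinf
  have : ∀ J, J ⊆ C → J.Finite → M.Indep J := by
    intro J hJC hJfin
    rcases hJC.ssubset_or_eq with h | h
    · exact hC.2.2 J h
    · exact absurd (h ▸ hJfin) hinf
  exact hC.2.1 (Matroid.indep_of_forall_finite_subset_indep C this)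

lemma exists_mcircuit_of_dep [M.Finitary] (hYE : Y ⊆ M.E) (hY : ¬ M.Indep Y) :
    ∃ C, C ⊆ Y ∧ MCircuit M C := by
  have hex : ∃ J : Set β, J ⊆ Y ∧ J.Finite ∧ ¬ M.Indep J := by
    by_contra h
    push_neg at h
    exact hY (Matroid.indep_of_forall_finite_subset_indep Y (fun J hJ hfin => h J hJ hfin))
  have hexn : ∃ n, ∃ J : Set β, J ⊆ Y ∧ J.Finite ∧ J.ncard = n ∧ ¬ M.Indep J := by
    obtain ⟨J, h1, h2, h3⟩ := hex
    exact ⟨J.ncard, J, h1, h2, rfl, h3⟩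
  classical
  obtain ⟨J, hJY, hJfin, hJcard, hJdep⟩ := Nat.find_spec hexn
  refine ⟨J, hJY, hJY.trans hYE, hJdep, ?_⟩
  intro D hD
  by_contra hDdep
  have hDfin : D.Finite := hJfin.subset hD.subset
  have : D.ncard < Nat.find hexn := by
    rw [← hJcard]
    exact Set.ncard_lt_ncard hD hJfin
  exact Nat.find_min hexn this ⟨D, hD.subset.trans hJY, hDfin, rfl, hDdep⟩

lemma mcircuit_closure (hC : MCircuit M C) (hx : x ∈ C) : x ∈ M.closure (C \ {x}) := by
  have hI : M.Indep (C \ {x}) := hC.2.2 _ (sdiff_singleton_ssubset.mpr hx)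
  by_contra hcl
  have hxE : x ∈ M.E := hC.1 hx
  have : M.Indep (insert x (C \ {x})) := by
    rw [hI.insert_indep_iff_of_notMem (by simp)]
    exact ⟨hxE, hcl⟩
  rw [insert_diff_singleton, insert_eq_of_mem hx] at this
  exact hC.2.1 this

lemma exists_mcircuit_mem [M.Finitary] (hX : M.Indep X) (he : e ∈ M.closure X) (heX : e ∉ X) :
    ∃ C, MCircuit M C ∧ e ∈ C ∧ C ⊆ insert e X := by
  have heE : e ∈ M.E := M.mem_ground_of_mem_closure he
  have hdep : ¬ M.Indep (insert e X) := by
    intro h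
    rw [hX.insert_indep_iff_of_notMem heX] at h
    exact h.2 he
  obtain ⟨C, hCsub, hC⟩ := exists_mcircuit_of_dep (insert_subset heE hX.subset_ground) hdep
  refine ⟨C, hC, ?_, hCsub⟩
  by_contra heC
  exact hC.2.1 (hX.subset (fun y hy => (hCsub hy).resolve_left (fun h => heC (h ▸ hy))))

lemma closure_finite_subset [M.Finitary] (he : e ∈ M.closure X) :
    ∃ X₀, X₀ ⊆ X ∧ X₀.Finite ∧ e ∈ M.closure X₀ := by
  obtain ⟨I, hI⟩ := M.exists_isBasis' X
  have hecl : e ∈ M.closure I := by rwa [hI.closure_eq_closure]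
  by_cases heI : e ∈ I
  · exact ⟨{e}, singleton_subset_iff.mpr (hI.subset heI), finite_singleton e,
      M.mem_closure_self e (hI.indep.subset_ground heI)⟩
  obtain ⟨C, hC, heC, hCsub⟩ := exists_mcircuit_mem hI.indep hecl heI
  refine ⟨C \ {e}, ?_, (mcirc_finite hC).subset diff_subset, mcircuit_closure hC heC⟩
  intro y hy
  exact hI.subset ((hCsub hy.1).resolve_left hy.2)

lemma card_le [M.Finitary] {J : Set β} (hDd : M.Indep Dd) (hID : M.Indep (I ∪ Dd))
    (hdisj : Disjoint I Dd) (hIfin : I.Finite) (hJfin : J.Finite) (hJE : J ⊆ M.E)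
    (hIcl : I ⊆ M.closure (J ∪ Dd)) : I.encard ≤ J.encard := by
  classical
  have hZ : ∀ x : β, x ∈ I → ∃ Z, Z ⊆ J ∪ Dd ∧ Z.Finite ∧ x ∈ M.closure Z := by
    intro x hx
    exact closure_finite_subset (hIcl hx)
  choose! Z hZsub hZfin hZcl using hZ
  set D₀ : Set β := (⋃ x ∈ I, Z x \ J) with hD₀def
  have hD₀Dd : D₀ ⊆ Dd := by
    rintro y hy
    simp only [hD₀def, mem_iUnion] at hy
    obtain ⟨x, hxI, hyZ, hyJ⟩ := hy
    exact (hZsub x hxI hyZ).resolve_left hyJ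
  have hD₀fin : D₀.Finite := hIfin.biUnion (fun x hx => (hZfin x hx).subset diff_subset)
  have hIcl₀ : I ⊆ M.closure (J ∪ D₀) := by
    intro x hx
    refine M.closure_subset_closure ?_ (hZcl x hx)
    intro y hy
    by_cases hyJ : y ∈ J
    · exact Or.inl hyJ
    · exact Or.inr (by simp only [hD₀def, mem_iUnion]; exact ⟨x, hx, hy, hyJ⟩)
  have hD₀ind : M.Indep D₀ := hDd.subset hD₀Dd
  have hJD₀E : J ∪ D₀ ⊆ M.E := union_subset hJE (hD₀ind.subset_ground)
  obtain ⟨K, hK, hD₀K⟩ := hD₀ind.subset_isBasis_of_subset subset_union_right hJD₀E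
  have hKfin : K.Finite := (hJfin.union hD₀fin).subset hK.subset
  have hA_ind : M.Indep (I ∪ D₀) := hID.subset (union_subset_union_right I hD₀Dd)
  have hAcl : I ∪ D₀ ⊆ M.closure K := by
    rw [hK.closure_eq_closure]
    exact union_subset hIcl₀ (subset_union_right.trans (M.subset_closure (J ∪ D₀) hJD₀E))
  by_contra hlt
  push_neg at hlt
  have hD₀top : D₀.encard ≠ ⊤ := encard_ne_top_iff.mpr hD₀fin
  have h1 : K.encard < (I ∪ D₀).encard := by
    have hKsplit : K.encard ≤ (K \ D₀).encard + D₀.encard := by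
      rw [← encard_diff_add_encard_inter K D₀]
      exact add_le_add le_rfl (Set.encard_le_encard inter_subset_right)
    have hKJ : (K \ D₀).encard ≤ J.encard := by
      refine Set.encard_le_encard ?_
      intro y hy
      exact ((hK.subset hy.1).resolve_right hy.2)
    have hIA : (I ∪ D₀).encard = I.encard + D₀.encard := by
      exact encard_union_eq (hdisj.mono_right hD₀Dd)
    calc K.encard ≤ J.encard + D₀.encard := hKsplit.trans (add_le_add hKJ le_rfl)
      _ < I.encard + D₀.encard := by
          exact (WithTop.add_lt_add_iff_right hD₀top).mpr hlt
      _ = (I ∪ D₀).encard := hIA.symm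
  obtain ⟨y, hy, hins⟩ := hK.indep.augment hA_ind h1
  have hycl : y ∈ M.closure K := hAcl hy.1
  rw [hK.indep.insert_indep_iff_of_notMem hy.2] at hins
  exact hins.2 hycl

lemma spans_back [M.Finitary] (hDd : M.Indep Dd) (hSD : M.Indep (S ∪ Dd)) (hSfin : S.Finite)
    (hQfin : Q.Finite) (hQdisj : Disjoint Q Dd) (hQD : M.Indep (Q ∪ Dd))
    (hQcl : Q ⊆ M.closure (S ∪ Dd)) (hcard : S.encard ≤ Q.encard) :
    S ⊆ M.closure (Q ∪ Dd) := by
  intro s hs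
  by_contra hscl
  have hQDdE : Q ∪ Dd ⊆ M.E := hQD.subset_ground
  have hsE : s ∈ M.E := hSD.subset_ground (Or.inl hs)
  have hsQD : s ∉ Q ∪ Dd := fun h => hscl (M.subset_closure _ hQDdE h)
  have hsQ : s ∉ Q := fun h => hsQD (Or.inl h)
  have hins : M.Indep (insert s (Q ∪ Dd)) := by
    rw [hQD.insert_indep_iff_of_notMem hsQD]
    exact ⟨hsE, hscl⟩
  have h1 : (insert s Q).encard ≤ S.encard := by
    refine card_le hDd ?_ ?_ (hQfin.insert s) hSfin
      (fun y hy => hSD.subset_ground (Or.inl hy)) ?_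
    · rwa [insert_union]
    · exact Set.disjoint_left.mpr (by
        rintro a (rfl | ha)
        · exact fun h => hsQD (Or.inr h)
        · exact fun h => Set.disjoint_left.mp hQdisj ha h)
    · exact insert_subset (M.subset_closure _ hSD.subset_ground (Or.inl hs)) hQcl
  rw [encard_insert_of_notMem hsQ] at h1
  have h2 : Q.encard + 1 ≤ Q.encard := h1.trans hcard
  rw [ENat.add_one_le_iff (encard_ne_top_iff.mpr hQfin)] at h2
  exact lt_irrefl _ h2

lemma funcirc_unique_aux (hI : M.Indep I) (hC₁ : MCircuit M C₁) (hC₂ : MCircuit M C₂)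
    (he₂ : e ∈ C₂) (h₁ : C₁ ⊆ insert e I) (h₂ : C₂ ⊆ insert e I)
    (hx : x ∈ C₁) (hx₂ : x ∉ C₂) : False := by
  have hxe : x ≠ e := fun h => hx₂ (h ▸ he₂)
  have hxI : x ∈ I := (h₁ hx).resolve_left hxe
  set Z : Set β := (C₁ ∪ C₂) \ {e, x} with hZdef
  have hZI : Z ⊆ I := by
    rintro y ⟨hy, hy2⟩
    simp only [mem_insert_iff, mem_singleton_iff, not_or] at hy2
    rcases hy with hy | hy
    · exact (h₁ hy).resolve_left hy2.1
    · exact (h₂ hy).resolve_left hy2.1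
  have heZ : e ∈ M.closure Z := by
    refine M.closure_subset_closure ?_ (mcircuit_closure hC₂ he₂)
    rintro y ⟨hy, hy2⟩
    refine ⟨Or.inr hy, ?_⟩
    simp only [mem_insert_iff, mem_singleton_iff, not_or]
    exact ⟨hy2, fun h => hx₂ (h ▸ hy)⟩
  have hxcl : x ∈ M.closure Z := by
    have h3 : x ∈ M.closure (insert e Z) := by
      refine M.closure_subset_closure ?_ (mcircuit_closure hC₁ hx)
      rintro y ⟨hy, hy2⟩
      by_cases hye : y = e
      · exact hye ▸ mem_insert e Z
      · exact Or.inr ⟨Or.inl hy, by simp [hye, hy2]⟩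
    rwa [Matroid.closure_insert_eq_of_mem_closure heZ] at h3
  have hxZ : x ∉ Z := fun h => h.2 (by simp)
  have hindep : M.Indep (insert x Z) := hI.subset (insert_subset hxI hZI)
  have := hindep.notMem_closure_diff_of_mem (mem_insert x Z)
  rw [insert_diff_self_of_notMem hxZ] at this
  exact this hxcl

lemma funcirc_unique (hI : M.Indep I) (hC₁ : MCircuit M C₁) (hC₂ : MCircuit M C₂)
    (he₁ : e ∈ C₁) (he₂ : e ∈ C₂) (h₁ : C₁ ⊆ insert e I) (h₂ : C₂ ⊆ insert e I) :
    C₁ = C₂ := by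
  by_contra hne
  by_cases hsub : C₁ ⊆ C₂
  · exact hC₁.2.1 (hC₂.2.2 _ (ssubset_iff_subset_ne.mpr ⟨hsub, hne⟩))
  · obtain ⟨x, hx, hx₂⟩ := not_subset.mp hsub
    exact funcirc_unique_aux hI hC₁ hC₂ he₂ h₁ h₂ hx hx₂

lemma circuit_support (hB : M.Indep B) (hD : MCircuit M D) (hA : A ⊆ B)
    (hDsub : D ⊆ Q ∪ B) (hQ : ∀ q ∈ Q, q ∈ M.closure A) :
    ∀ y ∈ D, y ∈ B → y ∈ A := by
  intro y hyD hyB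
  by_contra hyA
  have hABy : A ⊆ B \ {y} := fun a ha => ⟨hA ha, fun h => hyA (h ▸ ha)⟩
  have hBE : B \ {y} ⊆ M.E := diff_subset.trans hB.subset_ground
  have h1 : y ∈ M.closure (D \ {y}) := mcircuit_closure hD hyD
  have h2 : D \ {y} ⊆ M.closure (B \ {y}) := by
    rintro z ⟨hz, hzy⟩
    rcases hDsub hz with hzQ | hzB
    · exact M.closure_subset_closure hABy (hQ z hzQ)
    · exact M.subset_closure _ hBE ⟨hzB, by simpa using hzy⟩
  have h3 : y ∈ M.closure (B \ {y}) := by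
    have := M.closure_subset_closure_of_subset_closure h2
    exact this h1
  exact hB.notMem_closure_diff_of_mem hyB h3

end MatroidFacts

lemma deltaAux {κ : Cardinal.{v}} (hreg : κ.IsRegular) (hunc : ℵ₀ < κ) :
    ∀ (n : ℕ) (F : β → Set β) (H : Set β), #H = κ →
    (∀ e ∈ H, (F e).Finite ∧ (F e).ncard ≤ n) →
    ∃ H' R, H' ⊆ H ∧ #H' = κ ∧ ∀ e ∈ H', ∀ f ∈ H', e ≠ f → F e ∩ F f = R := by
  intro n
  induction n with
  | zero =>
    intro F H hH hcard
    refine ⟨H, ∅, subset_rfl, hH, fun e he f hf hef => ?_⟩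
    have h1 : F e = ∅ := (Set.ncard_eq_zero (hcard e he).1).mp
      (Nat.le_zero.mp (hcard e he).2)
    rw [h1, empty_inter]
  | succ n ih =>
    intro F H hH hcard
    by_cases hx : ∃ x, #{e : β | e ∈ H ∧ x ∈ F e} = κ
    · obtain ⟨x, hxκ⟩ := hx
      set H₂ : Set β := {e : β | e ∈ H ∧ x ∈ F e} with hH₂def
      have hcard₂ : ∀ e ∈ H₂, (F e \ {x}).Finite ∧ (F e \ {x}).ncard ≤ n := by
        intro e he
        refine ⟨(hcard e he.1).1.subset diff_subset, ?_⟩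
        have h1 := Set.ncard_diff_singleton_lt_of_mem he.2 (hcard e he.1).1
        have h2 := (hcard e he.1).2
        omega
      obtain ⟨H', R', hH'sub, hH'κ, hH'int⟩ := ih (fun e => F e \ {x}) H₂ hxκ hcard₂
      refine ⟨H', insert x R', fun e he => (hH'sub he).1, hH'κ, ?_⟩
      intro e he f hf hef
      have h1 := hH'int e he f hf hef
      have hxe : x ∈ F e := (hH'sub he).2
      have hxf : x ∈ F f := (hH'sub hf).2
      ext y
      constructor
      · rintro ⟨hy1, hy2⟩
        by_cases hyx : y = x
        · exact Or.inl hyx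
        · exact Or.inr (h1 ▸ ⟨⟨hy1, hyx⟩, ⟨hy2, hyx⟩⟩ : y ∈ R')
      · rintro (rfl | hy)
        · exact ⟨hxe, hxf⟩
        · rw [← h1] at hy
          exact ⟨hy.1.1, hy.2.1⟩
    · push_neg at hx
      have hfib : ∀ x, #{e : β | e ∈ H ∧ x ∈ F e} < κ := by
        intro x
        rcases lt_or_ge (#{e : β | e ∈ H ∧ x ∈ F e}) κ with h | h
        · exact h
        · exact absurd (le_antisymm
            ((mk_le_mk_of_subset (fun e he => he.1)).trans hH.le) h) (hx x)
      set 𝒞 : Set (Set β) :=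
        {A : Set β | A ⊆ H ∧ ∀ e ∈ A, ∀ f ∈ A, e ≠ f → F e ∩ F f = ∅} with h𝒞def
      obtain ⟨A, hAmax⟩ : ∃ A, Maximal (· ∈ 𝒞) A := by
        refine zorn_subset 𝒞 ?_
        intro c hc hchain
        refine ⟨⋃₀ c, ⟨?_, ?_⟩, fun s hs => subset_sUnion_of_mem hs⟩
        · exact sUnion_subset (fun s hs => (hc hs).1)
        · rintro e ⟨s, hs, hes⟩ f ⟨t, ht, hft⟩ hef
          rcases hchain.total hs ht with hst | hts
          · exact (hc ht).2 e (hst hes) f hft hef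
          · exact (hc hs).2 e hes f (hts hft) hef
      have hA𝒞 : A ∈ 𝒞 := hAmax.prop
      rcases lt_or_ge (#A) κ with hAκ | hAκ
      · exfalso
        set U : Set β := ⋃ e ∈ A, F e with hUdef
        have hUκ : #U < κ := by
          refine (mk_biUnion_le (fun e => F e) A).trans_lt
            (Cardinal.mul_lt_of_lt hreg.aleph0_le hAκ ?_)
          refine Cardinal.iSup_lt_of_isRegular hreg hAκ (fun e => ?_)
          exact lt_of_lt_of_le (hcard e.1 (hA𝒞.1 e.2)).1.lt_aleph0 hunc.le
        have hH₃ : #(H \ A : Set β) = κ := myDiff hreg hH hAκ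
        have hmeet : ∀ f ∈ H \ A, ∃ x, x ∈ F f ∧ x ∈ U := by
          rintro f ⟨hfH, hfA⟩
          by_contra hno
          push_neg at hno
          have : insert f A ∈ 𝒞 := by
            refine ⟨insert_subset hfH hA𝒞.1, ?_⟩
            rintro e (rfl | he) g (rfl | hg) hef
            · exact absurd rfl hef
            · refine eq_empty_iff_forall_notMem.mpr (fun x hx => hno x hx.1 ?_)
              exact mem_biUnion hg hx.2
            · refine eq_empty_iff_forall_notMem.mpr (fun x hx => hno x hx.2 ?_)
              exact mem_biUnion he hx.1
            · exact hA𝒞.2 e he g hg hef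
          have heq := hAmax.eq_of_le this (subset_insert f A)
          exact hfA (heq ▸ mem_insert f A)
        classical
        choose! g hg1 hg2 using hmeet
        have hgsmall : #(g '' (H \ A)) < κ := by
          refine lt_of_le_of_lt (mk_le_mk_of_subset ?_) hUκ
          rintro y ⟨f, hf, rfl⟩
          exact hg2 f hf
        obtain ⟨c, hc⟩ := myPigeon hreg (H \ A) hH₃ g hgsmall
        refine (hfib c).ne ?_
        refine le_antisymm ((mk_le_mk_of_subset (fun e he => he.1)).trans hH.le) ?_
        rw [← hc]
        refine mk_le_mk_of_subset ?_
        rintro e ⟨heHA, hgec⟩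
        exact ⟨heHA.1, hgec ▸ hg1 e heHA⟩
      · obtain ⟨H', hH'A, hH'κ⟩ := Cardinal.le_mk_iff_exists_subset.mp hAκ
        exact ⟨H', ∅, hH'A.trans hA𝒞.1, hH'κ,
          fun e he f hf hef => hA𝒞.2 e (hH'A he) f (hH'A hf) hef⟩

lemma deltaSystem {κ : Cardinal.{v}} (hreg : κ.IsRegular) (hunc : ℵ₀ < κ)
    (F : β → Set β) (H : Set β) (hH : #H = κ) (hfin : ∀ e ∈ H, (F e).Finite) :
    ∃ H' R, H' ⊆ H ∧ #H' = κ ∧ ∀ e ∈ H', ∀ f ∈ H', e ≠ f → F e ∩ F f = R := by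
  obtain ⟨n, hn⟩ := myPigeonNat hreg hunc H hH (fun e => (F e).ncard)
  obtain ⟨H', R, h1, h2, h3⟩ := deltaAux hreg hunc n F {x | x ∈ H ∧ (F x).ncard = n} hn
    (fun e he => ⟨hfin e he.1, he.2.le⟩)
  exact ⟨H', R, (fun e he => (h1 he).1), h2, h3⟩

lemma coreLemma {β : Type v} {κ : Cardinal.{v}} (hreg : κ.IsRegular) (hunc : ℵ₀ < κ)
    (M : Matroid β) [M.Finitary] (Dd : Set β) (hDd : M.Indep Dd) :
    ∀ (n : ℕ) (S H₁ : Set β), S.Finite → S.ncard ≤ n → M.Indep (S ∪ Dd) →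
    H₁ ⊆ M.E → Disjoint H₁ Dd → #H₁ = κ →
    (∀ e ∈ H₁, e ∈ M.closure (S ∪ Dd) ∧ e ∉ M.closure Dd) →
    ∃ e' ∈ H₁, ∃ 𝒬 : Set (Set β), #𝒬 = κ ∧
      (∀ Q ∈ 𝒬, Q ⊆ H₁ ∧ e' ∉ Q ∧ Q.Finite ∧ Q.Nonempty ∧ M.Indep (Q ∪ Dd) ∧
        e' ∈ M.closure (Q ∪ Dd)) ∧
      (∀ Q ∈ 𝒬, ∀ Q' ∈ 𝒬, Q ≠ Q' → Disjoint Q Q') := by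

  intro n
  induction n with
  | zero =>
    intro S H₁ hSfin hScard hSD hH₁E hH₁Dd hH₁κ hprop
    exfalso
    have hH₁ne : H₁.Nonempty := by
      rw [← Set.nonempty_coe_sort]
      exact Cardinal.mk_ne_zero_iff.mp (hH₁κ ▸ hreg.pos.ne')
    obtain ⟨e, he⟩ := hH₁ne
    have hS0 : S = ∅ := (Set.ncard_eq_zero hSfin).mp (Nat.le_zero.mp hScard)
    have := (hprop e he).1
    rw [hS0, empty_union] at this
    exact (hprop e he).2 this
  | succ n ih =>
    intro S H₁ hSfin hScard hSD hH₁E hH₁Dd hH₁κ hprop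
    classical
    have hH₁ne : H₁.Nonempty := by
      rw [← Set.nonempty_coe_sort]
      exact Cardinal.mk_ne_zero_iff.mp (hH₁κ ▸ hreg.pos.ne')
    have hSne : S.Nonempty := by
      rcases S.eq_empty_or_nonempty with h | h
      · exfalso
        obtain ⟨e, he⟩ := hH₁ne
        have := (hprop e he).1
        rw [h, empty_union] at this
        exact (hprop e he).2 this
      · exact h
    -- the collection of candidate petal-index sets
    set PF : Set (Set β) :=
      {Q | Q ⊆ H₁ ∧ Q.encard = S.encard ∧ M.Indep (Q ∪ Dd)} with hPFdef
    have hPFfin : ∀ Q ∈ PF, Q.Finite := by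
      intro Q hQ
      rw [← Set.encard_ne_top_iff, hQ.2.1, Set.encard_ne_top_iff]
      exact hSfin
    have hPFne : ∀ Q ∈ PF, Q.Nonempty := by
      intro Q hQ
      rw [← Set.encard_ne_zero, hQ.2.1, Set.encard_ne_zero]
      exact hSne
    -- Zorn to find a maximal pairwise disjoint subfamily
    obtain ⟨𝒬₀, h𝒬₀max⟩ : ∃ 𝒬₀, Maximal
        (fun 𝒬 : Set (Set β) => 𝒬 ⊆ PF ∧ ∀ Q ∈ 𝒬, ∀ Q' ∈ 𝒬, Q ≠ Q' → Disjoint Q Q') 𝒬₀ := by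
      refine zorn_subset _ ?_
      intro c hc hchain
      refine ⟨⋃₀ c, ⟨?_, ?_⟩, fun s hs => subset_sUnion_of_mem hs⟩
      · exact sUnion_subset (fun s hs => (hc hs).1)
      · rintro Q ⟨s, hs, hQs⟩ Q' ⟨t, ht, hQ't⟩ hQQ'
        rcases hchain.total hs ht with hst | hts
        · exact (hc ht).2 Q (hst hQs) Q' hQ't hQQ'
        · exact (hc hs).2 Q hQs Q' (hts hQ't) hQQ'
      -- note: empty chain gives ⋃₀ ∅ = ∅ which satisfies the property
    have h𝒬₀ := h𝒬₀max.prop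
    rcases lt_or_ge (#𝒬₀) κ with h𝒬₀κ | h𝒬₀κ
    · -- small maximal family: recurse
      set U : Set β := ⋃₀ 𝒬₀ with hUdef
      have hUκ : #U < κ := mySUnion hreg hunc h𝒬₀κ (fun A hA => hPFfin A (h𝒬₀.1 hA))
      set H₂ : Set β := H₁ \ U with hH₂def
      have hH₂κ : #H₂ = κ := myDiff hreg hH₁κ hUκ
      -- every S-sized subset of H₂ is dependent over Dd
      have hclaim : ∀ Q, Q ⊆ H₂ → Q.encard = S.encard → ¬ M.Indep (Q ∪ Dd) := by
        intro Q hQH₂ hQcard hQind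
        have hQPF : Q ∈ PF := ⟨hQH₂.trans diff_subset, hQcard, hQind⟩
        have hQne : Q.Nonempty := hPFne Q hQPF
        have hQnotin : Q ∉ 𝒬₀ := by
          intro hQin
          obtain ⟨x, hx⟩ := hQne
          exact (hQH₂ hx).2 ⟨Q, hQin, hx⟩
        have : Maximal _ 𝒬₀ := h𝒬₀max
        have hbig : (insert Q 𝒬₀) ⊆ PF ∧
            ∀ A ∈ insert Q 𝒬₀, ∀ A' ∈ insert Q 𝒬₀, A ≠ A' → Disjoint A A' := by
          refine ⟨insert_subset hQPF h𝒬₀.1, ?_⟩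
          have hdisjU : ∀ A' ∈ 𝒬₀, Disjoint Q A' := by
            intro A' hA'
            refine Set.disjoint_left.mpr (fun x hxQ hxA' => ?_)
            exact (hQH₂ hxQ).2 ⟨A', hA', hxA'⟩
          rintro A (rfl | hA) A' (rfl | hA') hAA'
          · exact absurd rfl hAA'
          · exact hdisjU A' hA'
          · exact (hdisjU A hA).symm
          · exact h𝒬₀.2 A hA A' hA' hAA'
        have heq := h𝒬₀max.eq_of_le hbig (subset_insert Q 𝒬₀)
        exact hQnotin (heq ▸ mem_insert Q 𝒬₀)
      -- maximal independent (over Dd) subset T of H₂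
      set NS : Set ℕ := {k | ∃ T, T ⊆ H₂ ∧ T.Finite ∧ T.ncard = k ∧ M.Indep (T ∪ Dd)}
        with hNSdef
      have hNS0 : 0 ∈ NS := ⟨∅, empty_subset _, finite_empty, Set.ncard_empty β,
        by rwa [empty_union]⟩
      have hNSbound : ∀ k ∈ NS, k < S.ncard := by
        rintro k ⟨T, hTH₂, hTfin, hTcard, hTind⟩
        have hTle : T.encard ≤ S.encard := by
          refine card_le hDd hTind ?_ hTfin hSfin
            (fun y hy => hSD.subset_ground (Or.inl hy)) ?_
          · exact Disjoint.mono_left (hTH₂.trans diff_subset) hH₁Dd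
          · exact fun y hy => (hprop y (diff_subset (hTH₂ hy))).1
        have hTne : T.encard ≠ S.encard := by
          intro h
          exact hclaim T hTH₂ h hTind
        have : T.encard < S.encard := lt_of_le_of_ne hTle hTne
        rw [encard_eq_ncard hTfin, encard_eq_ncard hSfin] at this
        exact_mod_cast hTcard ▸ (by exact_mod_cast this : T.ncard < S.ncard)
      set m : ℕ := S.ncard with hmdef
      set k : ℕ := Nat.findGreatest (· ∈ NS) m with hkdef
      have hkNS : k ∈ NS := Nat.findGreatest_spec (Nat.zero_le m) hNS0
      have hkmax : ∀ j ∈ NS, j ≤ k := by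
        intro j hj
        exact Nat.le_findGreatest (hNSbound j hj).le hj
      obtain ⟨T, hTH₂, hTfin, hTcard, hTind⟩ := hkNS
      -- every element of H₂ \ T is in the closure of T ∪ Dd
      have hspan : ∀ e ∈ H₂ \ T, e ∈ M.closure (T ∪ Dd) := by
        rintro e ⟨heH₂, heT⟩
        by_contra hecl
        have heDd : e ∉ Dd := Set.disjoint_left.mp hH₁Dd (diff_subset heH₂)
        have heTD : e ∉ T ∪ Dd := fun h => h.elim heT heDd
        have hins : M.Indep (insert e (T ∪ Dd)) := by
          rw [hTind.insert_indep_iff_of_notMem heTD]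
          exact ⟨hH₁E (diff_subset heH₂), hecl⟩
        have hinNS : k + 1 ∈ NS := by
          refine ⟨insert e T, insert_subset heH₂ hTH₂, hTfin.insert e, ?_, ?_⟩
          · rw [Set.ncard_insert_of_notMem heT hTfin, hTcard]
          · rwa [insert_union]
        exact absurd (hkmax _ hinNS) (by omega)
      -- recurse with T as the new spanning set
      have hkn : k ≤ n := by
        have h1 := hNSbound k ⟨T, hTH₂, hTfin, hTcard, hTind⟩
        omega
      have hH₂Tκ : #(H₂ \ T : Set β) = κ :=
        myDiff hreg hH₂κ (hTfin.lt_aleph0.trans hunc)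
      obtain ⟨e', he', 𝒬, h𝒬κ, h𝒬prop, h𝒬disj⟩ :=
        ih T (H₂ \ T) hTfin (hTcard ▸ hkn) hTind
          ((diff_subset.trans diff_subset).trans hH₁E)
          (Disjoint.mono_left (diff_subset.trans diff_subset) hH₁Dd)
          hH₂Tκ
          (fun e he => ⟨hspan e he, (hprop e (diff_subset (diff_subset he))).2⟩)
      refine ⟨e', diff_subset (diff_subset he'), 𝒬, h𝒬κ, ?_, h𝒬disj⟩
      intro Q hQ
      obtain ⟨h1, h2, h3, h4, h5, h6⟩ := h𝒬prop Q hQ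
      exact ⟨h1.trans (diff_subset.trans diff_subset), h2, h3, h4, h5, h6⟩
    · -- big family: done
      obtain ⟨𝒬₁, h𝒬₁sub, h𝒬₁κ⟩ := Cardinal.le_mk_iff_exists_subset.mp h𝒬₀κ
      obtain ⟨e', he'⟩ := hH₁ne
      set 𝒬₂ : Set (Set β) := 𝒬₁ \ {Q | e' ∈ Q} with h𝒬₂def
      have hsmall : #(𝒬₁ ∩ {Q | e' ∈ Q} : Set (Set β)) < κ := by
        have hss : (𝒬₁ ∩ {Q | e' ∈ Q} : Set (Set β)).Subsingleton := by
          intro Q hQ Q' hQ'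
          by_contra hne
          exact Set.disjoint_left.mp
            (h𝒬₀.2 Q (h𝒬₁sub hQ.1) Q' (h𝒬₁sub hQ'.1) hne) hQ.2 hQ'.2
        calc #(𝒬₁ ∩ {Q | e' ∈ Q} : Set (Set β)) ≤ 1 := mk_le_one_iff_set_subsingleton.mpr hss
          _ < κ := lt_of_lt_of_le one_lt_aleph0 hreg.aleph0_le
      have h𝒬₂κ : #𝒬₂ = κ := by
        have : 𝒬₂ = 𝒬₁ \ (𝒬₁ ∩ {Q | e' ∈ Q}) := by
          rw [h𝒬₂def]
          ext Q
          simp only [mem_diff, mem_inter_iff, mem_setOf_eq, not_and]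
          tauto
        rw [this]
        exact myDiff hreg h𝒬₁κ hsmall
      refine ⟨e', he', 𝒬₂, h𝒬₂κ, ?_, ?_⟩
      · intro Q hQ
        have hQPF : Q ∈ PF := h𝒬₀.1 (h𝒬₁sub hQ.1)
        have hQfin : Q.Finite := hPFfin Q hQPF
        have hQdisj : Disjoint Q Dd := Disjoint.mono_left hQPF.1 hH₁Dd
        refine ⟨hQPF.1, hQ.2, hQfin, hPFne Q hQPF, hQPF.2.2, ?_⟩
        -- e' ∈ closure (Q ∪ Dd)
        have hScl : S ⊆ M.closure (Q ∪ Dd) := by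
          refine spans_back hDd hSD hSfin hQfin hQdisj hQPF.2.2 ?_ hQPF.2.1.ge
          exact fun y hy => (hprop y (hQPF.1 hy)).1
        have hSDcl : S ∪ Dd ⊆ M.closure (Q ∪ Dd) := by
          refine union_subset hScl ?_
          exact (subset_union_right).trans (M.subset_closure _ hQPF.2.2.subset_ground)
        exact M.closure_subset_closure_of_subset_closure hSDcl (hprop e' he').1
      · intro Q hQ Q' hQ' hne
        exact h𝒬₀.2 Q (h𝒬₁sub hQ.1) Q' (h𝒬₁sub hQ'.1) hne

end Stmt9Aux
end Helpers

universe u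

open Cardinal Stmt9Aux

/-- The key lemma: if `B` is a base, `H ⊆ E \ B` has uncountable regular cardinality `κ`,
and some `B' ⊆ B` with `|B'| < κ` meets every fundamental circuit `C_M(e,B)` for `e ∈ H`,
then there are `e* ∈ H` and a κ-sized Δ-system of circuits with kernel `K` satisfying
`e* ∈ K ⊆ C_M(e*,B) \ B'`, all contained in `⋃_{e ∈ H} C_M(e,B)`. -/



theorem stmt9 {α : Type u} (M : Matroid α) [M.Finitary] (B : Set α) (hB : M.IsBase B)
    (κ : Cardinal.{u}) (hreg : κ.IsRegular) (hunc : Cardinal.aleph0 < κ)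
    (H : Set α) (hH : H ⊆ M.E \ B) (hHcard : Cardinal.mk H = κ)
    (Cf : α → Set α) (hCf : ∀ e ∈ H, FundCircuit M e B (Cf e))
    (B' : Set α) (hB'sub : B' ⊆ B) (hB'card : Cardinal.mk B' < κ)
    (hmeet : ∀ e ∈ H, (Cf e ∩ B').Nonempty) :
    ∃ e' ∈ H, ∃ K : Set α, e' ∈ K ∧ K ⊆ Cf e' \ B' ∧
      ∃ 𝒟 : Set (Set α), Cardinal.mk 𝒟 = κ ∧ (∀ C ∈ 𝒟, MCircuit M C) ∧
        (∀ C₁ ∈ 𝒟, ∀ C₂ ∈ 𝒟, C₁ ≠ C₂ → C₁ ∩ C₂ = K) ∧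
        (⋃₀ 𝒟) ⊆ ⋃ e ∈ H, Cf e := by
  classical
  have hCfc : ∀ e ∈ H, MCircuit M (Cf e) := fun e he => (hCf e he).1
  have hCfmem : ∀ e ∈ H, e ∈ Cf e := fun e he => (hCf e he).2.1
  have hCfB : ∀ e ∈ H, Cf e ⊆ insert e B := fun e he => (hCf e he).2.2
  have hCffin : ∀ e ∈ H, (Cf e).Finite := fun e he => mcirc_finite (hCfc e he)
  have hBind : M.Indep B := hB.indep
  -- Step 1 : Δ-system on the fundamental circuits
  obtain ⟨H', R, hH'H, hH'κ, hR⟩ := deltaSystem hreg hunc Cf H hHcard hCffin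
  -- two distinct elements of H'
  have hnt : Nontrivial ↥H' := by
    refine Cardinal.one_lt_iff_nontrivial.mp ?_
    rw [hH'κ]
    exact lt_trans one_lt_aleph0 hunc
  obtain ⟨⟨a, ha⟩, ⟨b, hb⟩, hab'⟩ := hnt
  have hab : a ≠ b := fun h => hab' (Subtype.ext h)
  have hRsub : ∀ e ∈ H', R ⊆ Cf e := by
    intro e he
    by_cases hea : e = a
    · subst hea
      intro x hx
      rw [← hR e he b hb (fun h => hab h)] at hx
      exact hx.1
    · intro x hx
      rw [← hR e he a ha hea] at hx
      exact hx.1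
  have hRB : R ⊆ B := by
    intro x hx
    have h1 : x ∈ Cf a ∩ Cf b := by rw [hR a ha b hb hab]; exact hx
    rcases hCfB a (hH'H ha) h1.1 with h | h
    · subst h
      rcases hCfB b (hH'H hb) h1.2 with h | h
      · exact absurd h hab
      · exact absurd h (hH (hH'H ha)).2
    · exact h
  -- Step 2 : uniformize the B'-traces
  set Gbad : Set α := {e | e ∈ H' ∧ ((Cf e ∩ B') \ R).Nonempty} with hGbaddef
  have hGbadκ : #Gbad < κ := by
    have hgex : ∀ e : ↥Gbad, ∃ x, x ∈ (Cf e.1 ∩ B') \ R := fun e => e.2.2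
    choose g hg using hgex
    have hinj : Function.Injective (fun e : ↥Gbad => (⟨g e, (hg e).1.2⟩ : ↥B')) := by
      intro e₁ e₂ heq
      have hx : g e₁ = g e₂ := congrArg Subtype.val heq
      by_contra hne
      have hne' : (e₁ : α) ≠ (e₂ : α) := fun h => hne (Subtype.ext h)
      have h1 : g e₁ ∈ Cf e₁.1 ∩ Cf e₂.1 := ⟨(hg e₁).1.1, hx ▸ (hg e₂).1.1⟩
      rw [hR e₁.1 e₁.2.1 e₂.1 e₂.2.1 hne'] at h1
      exact (hg e₁).2 h1
    exact lt_of_le_of_lt (Cardinal.mk_le_of_injective hinj) hB'card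
  set H₁ : Set α := H' \ Gbad with hH₁def
  have hH₁κ : #H₁ = κ := Stmt9Aux.myDiff hreg hH'κ hGbadκ
  have hH₁H' : H₁ ⊆ H' := diff_subset
  have hH₁H : H₁ ⊆ H := hH₁H'.trans hH'H
  have hCfB'R : ∀ e ∈ H₁, Cf e ∩ B' ⊆ R := by
    intro e he x hx
    by_contra hxR
    exact he.2 ⟨he.1, ⟨x, hx, hxR⟩⟩
  -- Step 3 : set up S = R, B'' = B' ∪ R, Dd = B \ B''
  set B'' : Set α := B' ∪ R with hB''def
  set Dd : Set α := B \ B'' with hDddef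
  have hB''B : B'' ⊆ B := union_subset hB'sub hRB
  have hDdB : Dd ⊆ B := diff_subset
  have hDdind : M.Indep Dd := hBind.subset hDdB
  have hCfB''eq : ∀ e ∈ H₁, Cf e ∩ B'' = R := by
    intro e he
    apply subset_antisymm
    · rintro x ⟨hx1, hx2⟩
      rcases hx2 with h | h
      · exact hCfB'R e he ⟨hx1, h⟩
      · exact h
    · intro x hx
      exact ⟨hRsub e (hH₁H' he) hx, Or.inr hx⟩
  have hH₁ne : H₁.Nonempty := by
    rw [← Set.nonempty_coe_sort]
    exact Cardinal.mk_ne_zero_iff.mp (hH₁κ ▸ hreg.pos.ne')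
  obtain ⟨a₁, ha₁⟩ := hH₁ne
  have hRne : R.Nonempty := by
    obtain ⟨y, hy⟩ := hmeet a₁ (hH₁H ha₁)
    exact ⟨y, hCfB'R a₁ ha₁ hy⟩
  have hRfin : R.Finite := (hCffin a₁ (hH₁H ha₁)).subset (hRsub a₁ (hH₁H' ha₁))
  have hSDind : M.Indep (R ∪ Dd) := hBind.subset (union_subset hRB hDdB)
  have hH₁E : H₁ ⊆ M.E := fun e he => (hH (hH₁H he)).1
  have hH₁B : ∀ e ∈ H₁, e ∉ B := fun e he => (hH (hH₁H he)).2
  have hH₁Dd : Disjoint H₁ Dd :=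
    Set.disjoint_left.mpr (fun e he hDd => hH₁B e he (hDdB hDd))
  have hprop : ∀ e ∈ H₁, e ∈ M.closure (R ∪ Dd) ∧ e ∉ M.closure Dd := by
    intro e he
    constructor
    · have h1 : Cf e \ {e} ⊆ R ∪ Dd := by
        rintro x ⟨hx, hxe⟩
        have hxB : x ∈ B := (hCfB e (hH₁H he) hx).resolve_left (by simpa using hxe)
        by_cases hxB'' : x ∈ B''
        · exact Or.inl ((hCfB''eq e he) ▸ (⟨hx, hxB''⟩ : x ∈ Cf e ∩ B''))
        · exact Or.inr ⟨hxB, hxB''⟩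
      exact M.closure_subset_closure h1 (mcircuit_closure (hCfc e (hH₁H he)) (hCfmem e (hH₁H he)))
    · intro hecl
      have heDd : e ∉ Dd := fun h => hH₁B e he (hDdB h)
      obtain ⟨C, hC, heC, hCsub⟩ := exists_mcircuit_mem hDdind hecl heDd
      have hCeq : C = Cf e := by
        refine funcirc_unique hBind hC (hCfc e (hH₁H he)) heC (hCfmem e (hH₁H he))
          (hCsub.trans (insert_subset_insert hDdB)) (hCfB e (hH₁H he))
      obtain ⟨y, hy⟩ := hmeet e (hH₁H he)
      have hyC : y ∈ C := hCeq ▸ hy.1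
      rcases hCsub hyC with h | h
      · exact hH₁B e he (h ▸ hB'sub hy.2)
      · exact h.2 (Or.inl hy.2)
  -- Step 4 : core lemma
  obtain ⟨e', he', 𝒬, h𝒬κ, h𝒬prop, h𝒬disj⟩ :=
    coreLemma hreg hunc M Dd hDdind R.ncard R H₁ hRfin le_rfl hSDind hH₁E hH₁Dd hH₁κ hprop
  have he'H : e' ∈ H := hH₁H he'
  have he'B : e' ∉ B := hH₁B e' he'
  -- Step 5 : pick circuits through e'
  have he'Dd : e' ∉ Dd := fun h => he'B (hDdB h)
  have hDex : ∀ Q ∈ 𝒬, ∃ Dc, MCircuit M Dc ∧ e' ∈ Dc ∧ Dc ⊆ insert e' (Q ∪ Dd) := by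
    intro Q hQ
    obtain ⟨hQH₁, he'Q, hQfin, hQne, hQind, he'cl⟩ := h𝒬prop Q hQ
    exact exists_mcircuit_mem hQind he'cl (fun h => h.elim he'Q he'Dd)
  choose! DQ hDQ1 hDQ2 hDQ3 using hDex
  -- support of the circuits inside B
  have hsupp : ∀ Q ∈ 𝒬, ∀ x ∈ DQ Q, x ∈ B → ∃ h ∈ insert e' Q, x ∈ Cf h \ {h} := by
    intro Q hQ x hx hxB
    obtain ⟨hQH₁, he'Q, hQfin, hQne, hQind, he'cl⟩ := h𝒬prop Q hQ
    have hQH : insert e' Q ⊆ H := insert_subset he'H (hQH₁.trans hH₁H)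
    set A : Set α := ⋃ h ∈ insert e' Q, (Cf h \ {h}) with hAdef
    have hAB : A ⊆ B := by
      rintro z hz
      simp only [hAdef, mem_iUnion] at hz
      obtain ⟨h, hh, hz1, hz2⟩ := hz
      exact (hCfB h (hQH hh) hz1).resolve_left (by simpa using hz2)
    have hDsub : DQ Q ⊆ (insert e' Q) ∪ B := by
      intro z hz
      rcases hDQ3 Q hQ hz with h | h
      · exact Or.inl (h ▸ mem_insert e' Q)
      · rcases h with h | h
        · exact Or.inl (Or.inr h)
        · exact Or.inr (hDdB h)
    have hQcl : ∀ q ∈ insert e' Q, q ∈ M.closure A := by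
      intro q hq
      refine M.closure_subset_closure ?_
        (mcircuit_closure (hCfc q (hQH hq)) (hCfmem q (hQH hq)))
      exact subset_biUnion_of_mem (u := fun h => Cf h \ {h}) hq
    have := circuit_support hBind (hDQ1 Q hQ) hAB hDsub hQcl x hx hxB
    simp only [hAdef, mem_iUnion] at this
    obtain ⟨h, hh, h2⟩ := this
    exact ⟨h, hh, h2⟩
  -- the trace on W := Cf e' \ B''
  set W : Set α := Cf e' \ B'' with hWdef
  have hWfin : W.Finite := (hCffin e' he'H).subset diff_subset
  have he'W : e' ∈ W := ⟨hCfmem e' he'H, fun h => he'B (hB''B h)⟩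
  have hDB'' : ∀ Q ∈ 𝒬, ∀ x ∈ DQ Q, x ∉ B'' := by
    intro Q hQ x hx hxB''
    obtain ⟨hQH₁, he'Q, hQfin, hQne, hQind, he'cl⟩ := h𝒬prop Q hQ
    rcases hDQ3 Q hQ hx with h | h
    · exact he'B (h ▸ hB''B hxB'')
    · rcases h with h | h
      · exact hH₁B x (hQH₁ h) (hB''B hxB'')
      · exact h.2 hxB''
  have hDD : ∀ Q ∈ 𝒬, ∀ Q' ∈ 𝒬, Q ≠ Q' →
      DQ Q ∩ DQ Q' = (DQ Q ∩ W) ∩ (DQ Q' ∩ W) := by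
    intro Q hQ Q' hQ' hne
    ext x
    constructor
    · rintro ⟨hx1, hx2⟩
      suffices hxW : x ∈ W by exact ⟨⟨hx1, hxW⟩, ⟨hx2, hxW⟩⟩
      have hxB'' : x ∉ B'' := hDB'' Q hQ x hx1
      obtain ⟨hQH₁, he'Q, hQfin, hQne, hQind, he'cl⟩ := h𝒬prop Q hQ
      obtain ⟨hQ'H₁, he'Q', hQ'fin, hQ'ne, hQ'ind, he'cl'⟩ := h𝒬prop Q' hQ'
      have hnotQ : x ∉ Q := by
        intro hxQ
        rcases hDQ3 Q' hQ' hx2 with h | h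
        · exact he'Q (h ▸ hxQ)
        · rcases h with h | h
          · exact Set.disjoint_left.mp (h𝒬disj Q hQ Q' hQ' hne) hxQ h
          · exact Set.disjoint_left.mp hH₁Dd (hQH₁ hxQ) h
      have hnotQ' : x ∉ Q' := by
        intro hxQ'
        rcases hDQ3 Q hQ hx1 with h | h
        · exact he'Q' (h ▸ hxQ')
        · rcases h with h | h
          · exact Set.disjoint_left.mp (h𝒬disj Q hQ Q' hQ' hne) h hxQ'
          · exact Set.disjoint_left.mp hH₁Dd (hQ'H₁ hxQ') h
      rcases hDQ3 Q hQ hx1 with hxe' | hxrest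
      · exact ⟨hxe' ▸ hCfmem e' he'H, hxe' ▸ fun h => he'B (hB''B h)⟩
      rcases hxrest with h | hxDd
      · exact absurd h hnotQ
      -- x ∈ Dd, use the supports on both sides
      have hxB : x ∈ B := hDdB hxDd
      obtain ⟨h, hh, hxh⟩ := hsupp Q hQ x hx1 hxB
      obtain ⟨h', hh', hxh'⟩ := hsupp Q' hQ' x hx2 hxB
      rcases hh with rfl | hhQ
      · exact ⟨hxh.1, hxB''⟩
      rcases hh' with rfl | hh'Q'
      · exact ⟨hxh'.1, hxB''⟩
      have hhh' : h ≠ h' := by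
        intro hEq
        exact Set.disjoint_left.mp (h𝒬disj Q hQ Q' hQ' hne) hhQ (hEq ▸ hh'Q')
      have hhH' : h ∈ H' := hH₁H' (hQH₁ hhQ)
      have hh'H' : h' ∈ H' := hH₁H' (hQ'H₁ hh'Q')
      have hxR : x ∈ R := by
        rw [← hR h hhH' h' hh'H' hhh']
        exact ⟨hxh.1, hxh'.1⟩
      exact absurd (Or.inr hxR) hxB''
    · rintro ⟨⟨h1, _⟩, ⟨h2, _⟩⟩
      exact ⟨h1, h2⟩
  -- Step 6 : pigeonhole the traces
  obtain ⟨K, hK⟩ := Stmt9Aux.myPigeonFin hreg hunc 𝒬 h𝒬κ (fun Q => DQ Q ∩ W)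
    (Set.Finite.subset hWfin.finite_subsets (by rintro T ⟨Q, hQ, rfl⟩; exact inter_subset_right))
  set 𝒬₁ : Set (Set α) := {Q | Q ∈ 𝒬 ∧ DQ Q ∩ W = K} with h𝒬₁def
  have h𝒬₁𝒬 : 𝒬₁ ⊆ 𝒬 := fun Q hQ => hQ.1
  have h𝒬₁ne : 𝒬₁.Nonempty := by
    rw [← Set.nonempty_coe_sort]
    exact Cardinal.mk_ne_zero_iff.mp (hK ▸ hreg.pos.ne')
  obtain ⟨Q₀, hQ₀⟩ := h𝒬₁ne
  have he'K : e' ∈ K := hQ₀.2 ▸ ⟨hDQ2 Q₀ hQ₀.1, he'W⟩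
  have hKW : K ⊆ W := hQ₀.2 ▸ inter_subset_right
  have hKCf : K ⊆ Cf e' \ B' := fun x hx => ⟨(hKW hx).1, fun h => (hKW hx).2 (Or.inl h)⟩
  -- pairwise intersections are K
  have hinter : ∀ Q ∈ 𝒬₁, ∀ Q' ∈ 𝒬₁, Q ≠ Q' → DQ Q ∩ DQ Q' = K := by
    intro Q hQ Q' hQ' hne
    rw [hDD Q hQ.1 Q' hQ'.1 hne, hQ.2, hQ'.2, inter_self]
  -- injectivity
  have hinj : ∀ Q ∈ 𝒬₁, ∀ Q' ∈ 𝒬₁, DQ Q = DQ Q' → Q = Q' := by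
    intro Q hQ Q' hQ' hEq
    by_contra hne
    have h1 : DQ Q = K := by
      have := hinter Q hQ Q' hQ' hne
      rwa [← hEq, inter_self] at this
    obtain ⟨s, hs⟩ := hRne
    have hsCf : s ∈ Cf e' := hRsub e' (hH₁H' he') hs
    have hsD : s ∉ DQ Q := by
      rw [h1]
      intro h
      exact (hKW h).2 (Or.inr hs)
    have hss : DQ Q ⊂ Cf e' := by
      refine ssubset_iff_subset_ne.mpr ⟨?_, ?_⟩
      · rw [h1]
        exact fun x hx => (hKW hx).1
      · intro h
        exact hsD (h ▸ hsCf)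
    exact (hDQ1 Q hQ.1).2.1 ((hCfc e' he'H).2.2 _ hss)
  refine ⟨e', he'H, K, he'K, hKCf, DQ '' 𝒬₁, ?_, ?_, ?_, ?_⟩
  · rw [Cardinal.mk_image_eq_of_injOn DQ 𝒬₁ (fun Q hQ Q' hQ' h => hinj Q hQ Q' hQ' h)]
    exact hK
  · rintro C ⟨Q, hQ, rfl⟩
    exact hDQ1 Q (h𝒬₁𝒬 hQ)
  · rintro C₁ ⟨Q, hQ, rfl⟩ C₂ ⟨Q', hQ', rfl⟩ hne
    exact hinter Q hQ Q' hQ' (fun h => hne (h ▸ rfl))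
  · rintro x ⟨Cset, ⟨Q, hQ, rfl⟩, hxC⟩
    have hQ𝒬 := h𝒬₁𝒬 hQ
    obtain ⟨hQH₁, he'Q, hQfin, hQne, hQind, he'cl⟩ := h𝒬prop Q hQ𝒬
    rcases hDQ3 Q hQ𝒬 hxC with rfl | h
    · exact mem_biUnion he'H (hCfmem x he'H)
    rcases h with h | h
    · exact mem_biUnion (hH₁H (hQH₁ h)) (hCfmem x (hH₁H (hQH₁ h)))
    · obtain ⟨hh, hhmem, hxh⟩ := hsupp Q hQ𝒬 x hxC (hDdB h)
      have hhH : hh ∈ H := (insert_subset he'H (hQH₁.trans hH₁H)) hhmem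
      exact mem_biUnion hhH hxh.1
end
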